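/- arXiv:1612.05057 — 4 statements merged into one kernel-verified Lean document; each statement's English description precedes it below -/
import Mathlib

section
/- Let (xᵏ, zᵏ, yᵏ)_{k≥0} be a sequence generated by the AD-PMM algorithm. Then for all k ≥ 0 and all (x, z, y) ∈ ℝⁿ × ℝᵐ × ℝᵐ: l(x^{k+1}, z^{k+1}, y) ≤ l(x, z, y^{k+1}) + c⟨z^{k+1} − zᵏ, A(x − x^{k+1})⟩ + (1/2)(‖x − xᵏ‖²_{M₁} − ‖x − x^{k+1}‖²_{M₁} + ‖z − zᵏ‖²_{M₂} − ‖z − z^{k+1}‖²_{M₂}) + (1/2)(c⁻¹‖y − yᵏ‖² − c⁻¹‖y − y^{k+1}‖²) − (1/2)(‖x^{k+1} − xᵏ‖²_{M₁} + ‖z^{k+1} − zᵏ‖²_{M₂} + c⁻¹‖y^{k+1} − yᵏ‖²). -/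
open scoped InnerProductSpace
open Filter

noncomputable section

section OpDefs

variable {E F : Type*} [NormedAddCommGroup E] [InnerProductSpace ℝ E]
  [NormedAddCommGroup F] [InnerProductSpace ℝ F]

/-- `U ∈ S₊(E)`: continuous linear, self-adjoint and positive semidefinite. -/
def IsSplusOp (U : E →L[ℝ] E) : Prop :=
  (∀ x y : E, ⟪U x, y⟫_ℝ = ⟪x, U y⟫_ℝ) ∧ ∀ x : E, 0 ≤ ⟪x, U x⟫_ℝ

/-- The squared seminorm `‖x‖²_U := ⟪x, U x⟫`. -/
def opSq (U : E →L[ℝ] E) (x : E) : ℝ := ⟪x, U x⟫_ℝ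

/-- Loewner order `U ⪰ V`. -/
def opLE (U V : E →L[ℝ] E) : Prop := ∀ x : E, ⟪x, V x⟫_ℝ ≤ ⟪x, U x⟫_ℝ

/-- `U ∈ P_α(E)`, i.e. `U ∈ S₊(E)` and `U ⪰ α·Id`. -/
def IsPalphaOp (α : ℝ) (U : E →L[ℝ] E) : Prop :=
  IsSplusOp U ∧ ∀ x : E, α * ‖x‖ ^ 2 ≤ ⟪x, U x⟫_ℝ

/-- Properness of an extended-real-valued function. -/
def ERealProper (f : E → EReal) : Prop := (∀ x, f x ≠ ⊥) ∧ ∃ x, f x ≠ ⊤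

/-- Convexity of an extended-real-valued function. -/
def ERealConvex (f : E → EReal) : Prop :=
  ∀ x y : E, ∀ a b : ℝ, 0 ≤ a → 0 ≤ b → a + b = 1 →
    f (a • x + b • y) ≤ (a : EReal) * f x + (b : EReal) * f y

/-- Weak convergence of a sequence in a Hilbert space, tested against inner products. -/
def WeakConv (u : ℕ → E) (p : E) : Prop :=
  ∀ w : E, Tendsto (fun k => ⟪u k, w⟫_ℝ) atTop (nhds ⟪p, w⟫_ℝ)

/-- The Lagrangian `l(x,z,y) = f(x) + g(z) + ⟪y, Ax - z⟫`. -/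
def Lagr (f : E → EReal) (g : F → EReal) (A : E →L[ℝ] F) (p : E) (q v : F) : EReal :=
  f p + g q + ((⟪v, A p - q⟫_ℝ : ℝ) : EReal)

/-- The Lagrangian with an additional smooth summand `h`:
`l(x,z,y) = f(x) + h(x) + g(z) + ⟪y, Ax - z⟫`. -/
def LagrH (f : E → EReal) (h : E → ℝ) (g : F → EReal) (A : E →L[ℝ] F)
    (p : E) (q v : F) : EReal :=
  f p + ((h p : ℝ) : EReal) + g q + ((⟪v, A p - q⟫_ℝ : ℝ) : EReal)

/-- `(xs, zs, ys)` is a saddle point of `l`. -/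
def IsSaddle (l : E → F → F → EReal) (xs : E) (zs ys : F) : Prop :=
  ∀ (p : E) (q v : F), l xs zs v ≤ l xs zs ys ∧ l xs zs ys ≤ l p q ys

/-- `xk1` is a minimizer of `u ↦ f u + (c/2)‖Au - zk + c⁻¹ yk‖² + (1/2)‖u - xk‖²_M`. -/
def IsXUpdate (f : E → EReal) (A : E →L[ℝ] F) (c : ℝ) (M : E →L[ℝ] E)
    (xk : E) (zk yk : F) (xk1 : E) : Prop :=
  ∀ u : E,
    f xk1 + (((c/2) * ‖A xk1 - zk + c⁻¹ • yk‖ ^ 2 + (1/2) * opSq M (xk1 - xk) : ℝ) : EReal) ≤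
    f u + (((c/2) * ‖A u - zk + c⁻¹ • yk‖ ^ 2 + (1/2) * opSq M (u - xk) : ℝ) : EReal)

/-- `xk1` is a minimizer of the `x`-subproblem with linearized smooth part:
`u ↦ f u + ⟪u - xk, ∇h(xk)⟫ + (c/2)‖Au - zk + c⁻¹ yk‖² + (1/2)‖u - xk‖²_M`. -/
def IsXUpdateGrad (f : E → EReal) (h' : E → E) (A : E →L[ℝ] F) (c : ℝ) (M : E →L[ℝ] E)
    (xk : E) (zk yk : F) (xk1 : E) : Prop :=
  ∀ u : E,
    f xk1 + ((⟪xk1 - xk, h' xk⟫_ℝ + (c/2) * ‖A xk1 - zk + c⁻¹ • yk‖ ^ 2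
        + (1/2) * opSq M (xk1 - xk) : ℝ) : EReal) ≤
    f u + ((⟪u - xk, h' xk⟫_ℝ + (c/2) * ‖A u - zk + c⁻¹ • yk‖ ^ 2
        + (1/2) * opSq M (u - xk) : ℝ) : EReal)

/-- `zk1` is a minimizer of `w ↦ g w + (c/2)‖Ax - w + c⁻¹ yk‖² + (1/2)‖w - zk‖²_M`. -/
def IsZUpdate (g : F → EReal) (c : ℝ) (M : F →L[ℝ] F)
    (Ax zk yk zk1 : F) : Prop :=
  ∀ w : F,
    g zk1 + (((c/2) * ‖Ax - zk1 + c⁻¹ • yk‖ ^ 2 + (1/2) * opSq M (zk1 - zk) : ℝ) : EReal) ≤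
    g w + (((c/2) * ‖Ax - w + c⁻¹ • yk‖ ^ 2 + (1/2) * opSq M (w - zk) : ℝ) : EReal)

end OpDefs

section Aux

open scoped InnerProductSpace

variable {E F : Type*} [NormedAddCommGroup E] [InnerProductSpace ℝ E]
  [NormedAddCommGroup F] [InnerProductSpace ℝ F]

lemma vi_lemma (φ : E → EReal) (hbot : ∀ u, φ u ≠ ⊥) (htop : ∃ u, φ u ≠ ⊤)
    (hconv : ERealConvex φ) (xs : E) (Q L C : E → ℝ)
    (hC : ∀ d, 0 ≤ C d)
    (hQ : ∀ (t : ℝ) (d : E), Q (xs + t • d) = Q xs + t * L d + t ^ 2 * C d)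
    (hmin : ∀ u, φ xs + ((Q xs : ℝ) : EReal) ≤ φ u + ((Q u : ℝ) : EReal)) :
    ∀ p, φ xs ≤ φ p + ((L (p - xs) : ℝ) : EReal) := by
  obtain ⟨u0, hu0⟩ := htop
  -- φ xs is finite
  have hxs_top : φ xs ≠ ⊤ := by
    intro h
    have h1 := hmin u0
    rw [h, EReal.top_add_of_ne_bot (by simp)] at h1
    have : φ u0 + ((Q u0 : ℝ) : EReal) ≠ ⊤ := by
      obtain ⟨r, hr⟩ : ∃ r : ℝ, φ u0 = (r : EReal) :=
        ⟨(φ u0).toReal, (EReal.coe_toReal hu0 (hbot u0)).symm⟩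
      rw [hr, ← EReal.coe_add]; exact EReal.coe_ne_top _
    exact this (top_le_iff.mp h1)
  set a : ℝ := (φ xs).toReal with ha
  have hxa : φ xs = (a : EReal) := (EReal.coe_toReal hxs_top (hbot xs)).symm
  intro p
  by_cases hp : φ p = ⊤
  · rw [hp, EReal.top_add_of_ne_bot (by simp)]; exact le_top
  set b : ℝ := (φ p).toReal with hb
  have hpb : φ p = (b : EReal) := (EReal.coe_toReal hp (hbot p)).symm
  set d := p - xs with hd
  -- step inequality for t ∈ (0,1]
  have step : ∀ t : ℝ, 0 < t → t ≤ 1 → a ≤ b + L d + t * C d := by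
    intro t ht0 ht1
    have hcomb := hconv xs p (1 - t) t (by linarith) (le_of_lt ht0) (by ring)
    have hpt : (1 - t) • xs + t • p = xs + t • d := by
      rw [hd, smul_sub, sub_smul, one_smul]; abel
    rw [hpt, hxa, hpb] at hcomb
    have hcomb' : φ (xs + t • d) ≤ (((1 - t) * a + t * b : ℝ) : EReal) := by
      calc φ (xs + t • d) ≤ ((1 - t : ℝ) : EReal) * (a : EReal) + ((t : ℝ) : EReal) * (b : EReal) := hcomb
        _ = (((1 - t) * a + t * b : ℝ) : EReal) := by
            rw [← EReal.coe_mul, ← EReal.coe_mul, ← EReal.coe_add]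
    have h1 := hmin (xs + t • d)
    rw [hxa] at h1
    have h2 : ((a + Q xs : ℝ) : EReal) ≤ (((1 - t) * a + t * b + Q (xs + t • d) : ℝ) : EReal) := by
      calc ((a + Q xs : ℝ) : EReal) = (a : EReal) + ((Q xs : ℝ) : EReal) := by rw [EReal.coe_add]
        _ ≤ φ (xs + t • d) + ((Q (xs + t • d) : ℝ) : EReal) := h1
        _ ≤ (((1 - t) * a + t * b : ℝ) : EReal) + ((Q (xs + t • d) : ℝ) : EReal) :=
            add_le_add hcomb' (le_refl _)
        _ = (((1 - t) * a + t * b + Q (xs + t • d) : ℝ) : EReal) := by norm_cast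
    have h3 : a + Q xs ≤ (1 - t) * a + t * b + Q (xs + t • d) := EReal.coe_le_coe_iff.mp h2
    rw [hQ t d] at h3
    have h4 : t * a ≤ t * b + t * L d + t ^ 2 * C d := by nlinarith
    have h5 : t * a ≤ t * (b + L d + t * C d) := by nlinarith
    exact le_of_mul_le_mul_left (by linarith [h5]) ht0
  have key : a ≤ b + L d := by
    by_contra hcon
    push_neg at hcon
    set ε := (a - (b + L d)) / 2 with hε
    have hε0 : 0 < ε := by simp only [hε]; linarith
    have ht : 0 < min 1 (ε / (C d + 1)) := by
      exact lt_min one_pos (div_pos hε0 (by linarith [hC d]))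
    have := step _ ht (min_le_left _ _)
    have hCd := hC d
    have : min 1 (ε / (C d + 1)) * C d ≤ ε := by
      calc min 1 (ε / (C d + 1)) * C d ≤ (ε / (C d + 1)) * C d := by
            apply mul_le_mul_of_nonneg_right (min_le_right _ _) hCd
        _ ≤ (ε / (C d + 1)) * (C d + 1) := by
            apply mul_le_mul_of_nonneg_left (by linarith) (by positivity)
        _ = ε := by field_simp
    linarith [step _ ht (min_le_left _ _)]
  rw [hxa, hpb, ← EReal.coe_add, EReal.coe_le_coe_iff]
  exact key

lemma opSq_add (M : E →L[ℝ] E) (hM : IsSplusOp M) (u w : E) :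
    opSq M (u + w) = opSq M u + 2 * ⟪M w, u⟫_ℝ + opSq M w := by
  simp only [opSq, map_add, inner_add_left, inner_add_right]
  have e1 : ⟪u, M w⟫_ℝ = ⟪w, M u⟫_ℝ := (hM.1 u w).symm.trans (real_inner_comm w (M u))
  have e2 := hM.1 w u
  linarith

lemma polar_op (M : E →L[ℝ] E) (hM : IsSplusOp M) (s t u : E) :
    ⟪M (s - t), u - s⟫_ℝ =
      (1/2) * (opSq M (u - t) - opSq M (u - s)) - (1/2) * opSq M (s - t) := by
  have h : u - t = (u - s) + (s - t) := by abel
  rw [h, opSq_add M hM]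
  ring

lemma polar_norm (s t u : F) :
    ⟪s - t, u - s⟫_ℝ =
      (1/2) * (‖u - t‖ ^ 2 - ‖u - s‖ ^ 2) - (1/2) * ‖s - t‖ ^ 2 := by
  have h : u - t = (u - s) + (s - t) := by abel
  rw [h, ← real_inner_self_eq_norm_sq, ← real_inner_self_eq_norm_sq,
    ← real_inner_self_eq_norm_sq, inner_add_left, inner_add_right, inner_add_right,
    real_inner_comm (u - s) (s - t)]
  ring

end Aux
section Aux2
open scoped InnerProductSpace
variable {F : Type*} [NormedAddCommGroup F] [InnerProductSpace ℝ F]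

lemma cancel_id (c : ℝ) (hc : c ≠ 0) (AX Ap zk Z1 yk q v : F) :
    ⟪v, AX - Z1⟫_ℝ + (c * ⟪AX - zk + c⁻¹ • yk, Ap - AX⟫_ℝ)
      - (c * ⟪AX - Z1 + c⁻¹ • yk, q - Z1⟫_ℝ)
      - ⟪yk + c • (AX - Z1), Ap - q⟫_ℝ
      - c * ⟪Z1 - zk, Ap - AX⟫_ℝ
      - ⟪v - (yk + c • (AX - Z1)), AX - Z1⟫_ℝ = 0 := by
  simp only [inner_sub_left, inner_sub_right, inner_add_left, inner_add_right,
    real_inner_smul_left, real_inner_smul_right]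
  field_simp
  ring

end Aux2
theorem stmt0 (n m : ℕ)
    (f : EuclideanSpace ℝ (Fin n) → EReal) (g : EuclideanSpace ℝ (Fin m) → EReal)
    (hfp : ERealProper f) (hfc : ERealConvex f) (hfl : LowerSemicontinuous f)
    (hgp : ERealProper g) (hgc : ERealConvex g) (hgl : LowerSemicontinuous g)
    (A : EuclideanSpace ℝ (Fin n) →L[ℝ] EuclideanSpace ℝ (Fin m))
    (c : ℝ) (hc : 0 < c)
    (M₁ : EuclideanSpace ℝ (Fin n) →L[ℝ] EuclideanSpace ℝ (Fin n))
    (M₂ : EuclideanSpace ℝ (Fin m) →L[ℝ] EuclideanSpace ℝ (Fin m))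
    (hM₁ : IsSplusOp M₁) (hM₂ : IsSplusOp M₂)
    (x : ℕ → EuclideanSpace ℝ (Fin n)) (z y : ℕ → EuclideanSpace ℝ (Fin m))
    (hx : ∀ k : ℕ, IsXUpdate f A c M₁ (x k) (z k) (y k) (x (k+1)))
    (hz : ∀ k : ℕ, IsZUpdate g c M₂ (A (x (k+1))) (z k) (y k) (z (k+1)))
    (hy : ∀ k : ℕ, y (k+1) = y k + c • (A (x (k+1)) - z (k+1))) :
    ∀ k : ℕ, ∀ (p : EuclideanSpace ℝ (Fin n)) (q v : EuclideanSpace ℝ (Fin m)),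
      Lagr f g A (x (k+1)) (z (k+1)) v ≤
        Lagr f g A p q (y (k+1)) +
          ((c * ⟪z (k+1) - z k, A (p - x (k+1))⟫_ℝ
            + (1/2) * (opSq M₁ (p - x k) - opSq M₁ (p - x (k+1))
                + opSq M₂ (q - z k) - opSq M₂ (q - z (k+1)))
            + (1/2) * (c⁻¹ * ‖v - y k‖ ^ 2 - c⁻¹ * ‖v - y (k+1)‖ ^ 2)
            - (1/2) * (opSq M₁ (x (k+1) - x k) + opSq M₂ (z (k+1) - z k)
                + c⁻¹ * ‖y (k+1) - y k‖ ^ 2) : ℝ) : EReal) := by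
  intro k p q v
  have hc' : c ≠ 0 := ne_of_gt hc
  -- x-side variational inequality
  have hCx : ∀ d : EuclideanSpace ℝ (Fin n),
      0 ≤ (c/2) * ‖A d‖ ^ 2 + (1/2) * opSq M₁ d := by
    intro d
    have h1 := hM₁.2 d
    have h2 : (0:ℝ) ≤ (c/2) * ‖A d‖ ^ 2 := by positivity
    simp only [opSq]
    linarith
  have hQx : ∀ (t : ℝ) (d : EuclideanSpace ℝ (Fin n)),
      (fun u => (c/2) * ‖A u - z k + c⁻¹ • y k‖ ^ 2 + (1/2) * opSq M₁ (u - x k)) (x (k+1) + t • d)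
      = (fun u => (c/2) * ‖A u - z k + c⁻¹ • y k‖ ^ 2 + (1/2) * opSq M₁ (u - x k)) (x (k+1))
        + t * ((fun d => c * ⟪A (x (k+1)) - z k + c⁻¹ • y k, A d⟫_ℝ
            + ⟪M₁ (x (k+1) - x k), d⟫_ℝ) d)
        + t ^ 2 * ((fun d => (c/2) * ‖A d‖ ^ 2 + (1/2) * opSq M₁ d) d) := by
    intro t d
    simp only
    have hv : A (x (k+1) + t • d) - z k + c⁻¹ • y k
        = (A (x (k+1)) - z k + c⁻¹ • y k) + t • A d := by
      rw [map_add, map_smul]; abel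
    have hn : ‖(A (x (k+1)) - z k + c⁻¹ • y k) + t • A d‖ ^ 2
        = ‖A (x (k+1)) - z k + c⁻¹ • y k‖ ^ 2
          + 2 * (t * ⟪A (x (k+1)) - z k + c⁻¹ • y k, A d⟫_ℝ) + t ^ 2 * ‖A d‖ ^ 2 := by
      rw [norm_add_sq_real, real_inner_smul_right, norm_smul]
      simp [mul_pow, sq_abs]
    have he : x (k+1) + t • d - x k = (x (k+1) - x k) + t • d := by abel
    have h1 : ⟪M₁ (t • d), x (k+1) - x k⟫_ℝ = t * ⟪M₁ (x (k+1) - x k), d⟫_ℝ := by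
      rw [map_smul, real_inner_smul_left]
      congr 1
      exact (hM₁.1 d (x (k+1) - x k)).trans (real_inner_comm (M₁ (x (k+1) - x k)) d)
    have h2 : opSq M₁ (t • d) = t ^ 2 * opSq M₁ d := by
      simp only [opSq, map_smul, real_inner_smul_left, real_inner_smul_right]; ring
    rw [hv, hn, he, opSq_add M₁ hM₁, h1, h2]
    ring
  have hVIx := vi_lemma f hfp.1 hfp.2 hfc (x (k+1))
    (fun u => (c/2) * ‖A u - z k + c⁻¹ • y k‖ ^ 2 + (1/2) * opSq M₁ (u - x k))
    (fun d => c * ⟪A (x (k+1)) - z k + c⁻¹ • y k, A d⟫_ℝ + ⟪M₁ (x (k+1) - x k), d⟫_ℝ)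
    (fun d => (c/2) * ‖A d‖ ^ 2 + (1/2) * opSq M₁ d)
    hCx hQx (hx k) p
  -- z-side variational inequality
  have hCz : ∀ d : EuclideanSpace ℝ (Fin m),
      0 ≤ (c/2) * ‖d‖ ^ 2 + (1/2) * opSq M₂ d := by
    intro d
    have h1 := hM₂.2 d
    have h2 : (0:ℝ) ≤ (c/2) * ‖d‖ ^ 2 := by positivity
    simp only [opSq]
    linarith
  have hQz : ∀ (t : ℝ) (d : EuclideanSpace ℝ (Fin m)),
      (fun w => (c/2) * ‖A (x (k+1)) - w + c⁻¹ • y k‖ ^ 2 + (1/2) * opSq M₂ (w - z k)) (z (k+1) + t • d)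
      = (fun w => (c/2) * ‖A (x (k+1)) - w + c⁻¹ • y k‖ ^ 2 + (1/2) * opSq M₂ (w - z k)) (z (k+1))
        + t * ((fun d => -(c * ⟪A (x (k+1)) - z (k+1) + c⁻¹ • y k, d⟫_ℝ)
            + ⟪M₂ (z (k+1) - z k), d⟫_ℝ) d)
        + t ^ 2 * ((fun d => (c/2) * ‖d‖ ^ 2 + (1/2) * opSq M₂ d) d) := by
    intro t d
    simp only
    have hv : A (x (k+1)) - (z (k+1) + t • d) + c⁻¹ • y k
        = (A (x (k+1)) - z (k+1) + c⁻¹ • y k) - t • d := by abel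
    have hn : ‖(A (x (k+1)) - z (k+1) + c⁻¹ • y k) - t • d‖ ^ 2
        = ‖A (x (k+1)) - z (k+1) + c⁻¹ • y k‖ ^ 2
          - 2 * (t * ⟪A (x (k+1)) - z (k+1) + c⁻¹ • y k, d⟫_ℝ) + t ^ 2 * ‖d‖ ^ 2 := by
      rw [norm_sub_sq_real, real_inner_smul_right, norm_smul]
      simp [mul_pow, sq_abs]
    have he : z (k+1) + t • d - z k = (z (k+1) - z k) + t • d := by abel
    have h1 : ⟪M₂ (t • d), z (k+1) - z k⟫_ℝ = t * ⟪M₂ (z (k+1) - z k), d⟫_ℝ := by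
      rw [map_smul, real_inner_smul_left]
      congr 1
      exact (hM₂.1 d (z (k+1) - z k)).trans (real_inner_comm (M₂ (z (k+1) - z k)) d)
    have h2 : opSq M₂ (t • d) = t ^ 2 * opSq M₂ d := by
      simp only [opSq, map_smul, real_inner_smul_left, real_inner_smul_right]; ring
    rw [hv, hn, he, opSq_add M₂ hM₂, h1, h2]
    ring
  have hVIz := vi_lemma g hgp.1 hgp.2 hgc (z (k+1))
    (fun w => (c/2) * ‖A (x (k+1)) - w + c⁻¹ • y k‖ ^ 2 + (1/2) * opSq M₂ (w - z k))
    (fun d => -(c * ⟪A (x (k+1)) - z (k+1) + c⁻¹ • y k, d⟫_ℝ) + ⟪M₂ (z (k+1) - z k), d⟫_ℝ)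
    (fun d => (c/2) * ‖d‖ ^ 2 + (1/2) * opSq M₂ d)
    hCz hQz (hz k) q
  -- top cases
  unfold Lagr
  by_cases hp : f p = ⊤
  · rw [hp, EReal.top_add_of_ne_bot (hgp.1 q), EReal.top_add_of_ne_bot (EReal.coe_ne_bot _),
      EReal.top_add_of_ne_bot (EReal.coe_ne_bot _)]
    exact le_top
  by_cases hq : g q = ⊤
  · rw [hq, EReal.add_top_of_ne_bot (hfp.1 p), EReal.top_add_of_ne_bot (EReal.coe_ne_bot _),
      EReal.top_add_of_ne_bot (EReal.coe_ne_bot _)]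
    exact le_top
  -- all finite: pass to reals
  have hfpc : f p = ((f p).toReal : EReal) := (EReal.coe_toReal hp (hfp.1 p)).symm
  have hgqc : g q = ((g q).toReal : EReal) := (EReal.coe_toReal hq (hgp.1 q)).symm
  set bp := (f p).toReal
  set bq := (g q).toReal
  have hfx_top : f (x (k+1)) ≠ ⊤ := by
    intro h
    rw [h, hfpc, ← EReal.coe_add] at hVIx
    exact (EReal.coe_ne_top _) (top_le_iff.mp hVIx)
  have hgz_top : g (z (k+1)) ≠ ⊤ := by
    intro h
    rw [h, hgqc, ← EReal.coe_add] at hVIz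
    exact (EReal.coe_ne_top _) (top_le_iff.mp hVIz)
  have hfxc : f (x (k+1)) = ((f (x (k+1))).toReal : EReal) :=
    (EReal.coe_toReal hfx_top (hfp.1 _)).symm
  have hgzc : g (z (k+1)) = ((g (z (k+1))).toReal : EReal) :=
    (EReal.coe_toReal hgz_top (hgp.1 _)).symm
  set a1 := (f (x (k+1))).toReal
  set b1 := (g (z (k+1))).toReal
  rw [hfxc, hfpc, ← EReal.coe_add] at hVIx
  rw [hgzc, hgqc, ← EReal.coe_add] at hVIz
  rw [hfxc, hgzc, hfpc, hgqc]
  have hVIx' : a1 ≤ bp + (c * ⟪A (x (k+1)) - z k + c⁻¹ • y k, A (p - x (k+1))⟫_ℝ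
      + ⟪M₁ (x (k+1) - x k), p - x (k+1)⟫_ℝ) := EReal.coe_le_coe_iff.mp hVIx
  have hVIz' : b1 ≤ bq + (-(c * ⟪A (x (k+1)) - z (k+1) + c⁻¹ • y k, q - z (k+1)⟫_ℝ)
      + ⟪M₂ (z (k+1) - z k), q - z (k+1)⟫_ℝ) := EReal.coe_le_coe_iff.mp hVIz
  rw [← EReal.coe_add, ← EReal.coe_add, ← EReal.coe_add, ← EReal.coe_add, ← EReal.coe_add,
    EReal.coe_le_coe_iff]
  -- now a real inequality
  have e1 := polar_op M₁ hM₁ (x (k+1)) (x k) p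
  have e2 := polar_op M₂ hM₂ (z (k+1)) (z k) q
  have e3 := polar_norm (y (k+1)) (y k) v
  have hW : A (x (k+1)) - z (k+1) = c⁻¹ • (y (k+1) - y k) := by
    rw [hy k]
    rw [add_sub_cancel_left, smul_smul, inv_mul_cancel₀ hc', one_smul]
  have e4 : ⟪v - y (k+1), A (x (k+1)) - z (k+1)⟫_ℝ
      = c⁻¹ * ⟪y (k+1) - y k, v - y (k+1)⟫_ℝ := by
    rw [hW, real_inner_smul_right, real_inner_comm]
  have e5 : ⟪v, A (x (k+1)) - z (k+1)⟫_ℝ - ⟪y (k+1), A (x (k+1)) - z (k+1)⟫_ℝ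
      = c⁻¹ * ((1/2) * (‖v - y k‖ ^ 2 - ‖v - y (k+1)‖ ^ 2) - (1/2) * ‖y (k+1) - y k‖ ^ 2) := by
    rw [← inner_sub_left, e4, e3]
  have hmap : A (p - x (k+1)) = A p - A (x (k+1)) := map_sub A p (x (k+1))
  have e6 := cancel_id c hc' (A (x (k+1))) (A p) (z k) (z (k+1)) (y k) q v
  rw [← hy k] at e6
  have e7 : ⟪v - y (k+1), A (x (k+1)) - z (k+1)⟫_ℝ
      = ⟪v, A (x (k+1)) - z (k+1)⟫_ℝ - ⟪y (k+1), A (x (k+1)) - z (k+1)⟫_ℝ :=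
    inner_sub_left _ _ _
  have e5' : ⟪v, A (x (k+1)) - z (k+1)⟫_ℝ - ⟪y (k+1), A (x (k+1)) - z (k+1)⟫_ℝ
      = (1/2) * (c⁻¹ * ‖v - y k‖ ^ 2 - c⁻¹ * ‖v - y (k+1)‖ ^ 2)
        - (1/2) * (c⁻¹ * ‖y (k+1) - y k‖ ^ 2) := by rw [e5]; ring
  rw [hmap] at hVIx' ⊢
  linarith [e6, e1, e2, e5', e7, hVIx', hVIz']
end
end

section
/- Let (x*, z*, y*) be a saddle point of the Lagrangian l and (xᵏ, zᵏ, yᵏ)_{k≥0} a sequence generated by the AD-PMM algorithm. Then for all k ≥ 1: ‖x^{k+1} − xᵏ‖²_{M₁} + ‖z^{k+1} − zᵏ‖²_{M₂} + c⁻¹‖y^{k+1} − yᵏ‖² + ‖x* − x^{k+1}‖²_{M₁} + ‖z* − z^{k+1}‖²_{M₂ + cI} + c⁻¹‖y* − y^{k+1}‖² + ‖z^{k+1} − zᵏ‖²_{M₂} ≤ ‖x* − xᵏ‖²_{M₁} + ‖z* − zᵏ‖²_{M₂ + cI} + c⁻¹‖y* − yᵏ‖² + ‖zᵏ − z^{k−1}‖²_{M₂}.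 -/
open scoped InnerProductSpace
open Filter

noncomputable section

section Aux
variable {E F : Type*} [NormedAddCommGroup E] [InnerProductSpace ℝ E]
  [NormedAddCommGroup F] [InnerProductSpace ℝ F]

lemma le_of_forall_t {a b C : ℝ} (hC : 0 ≤ C)
    (h : ∀ t : ℝ, 0 < t → t ≤ 1 → a ≤ b + t * C) : a ≤ b := by
  refine le_of_forall_pos_le_add fun ε hε => ?_
  have hC1 : (0:ℝ) < C + 1 := by linarith
  have ht : (0:ℝ) < min 1 (ε / (C + 1)) := lt_min one_pos (div_pos hε hC1)
  have h1 := h _ ht (min_le_left _ _)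
  have h2 : min 1 (ε / (C + 1)) * C ≤ ε := by
    calc min 1 (ε / (C + 1)) * C ≤ (ε / (C + 1)) * C :=
          mul_le_mul_of_nonneg_right (min_le_right _ _) hC
    _ ≤ ε := by rw [div_mul_eq_mul_div, div_le_iff₀ hC1]; nlinarith
  linarith

lemma exists_real_of_le {a : EReal} {s t : ℝ}
    (h : a + (s : EReal) ≤ (t : EReal)) (hb : a ≠ ⊥) :
    ∃ r : ℝ, a = (r : EReal) ∧ r + s ≤ t := by
  have hnt : a ≠ ⊤ := by
    intro hT
    rw [hT, EReal.top_add_coe] at h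
    exact ((EReal.coe_lt_top t : (t : EReal) < ⊤)).not_ge h
  refine ⟨a.toReal, (EReal.coe_toReal hnt hb).symm, ?_⟩
  rw [← EReal.coe_toReal hnt hb, ← EReal.coe_add, EReal.coe_le_coe_iff] at h
  exact h

/-- first-order optimality from a minimizer of `f + (c/2)‖B·-b‖² + ½‖·-x₀‖²_M` -/
lemma key_vi {f : E → EReal} (hfc : ERealConvex f)
    (B : E →L[ℝ] F) (b : F) {c : ℝ} (hc : 0 < c)
    {M : E →L[ℝ] E} (hM : IsSplusOp M) (x₀ x1 u : E) {r1 ru : ℝ}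
    (h1 : f x1 = (r1 : EReal)) (hu : f u = (ru : EReal))
    (hmin : ∀ v : E,
      f x1 + (((c/2) * ‖B x1 - b‖ ^ 2 + (1/2) * opSq M (x1 - x₀) : ℝ) : EReal) ≤
      f v + (((c/2) * ‖B v - b‖ ^ 2 + (1/2) * opSq M (v - x₀) : ℝ) : EReal))
    (w dd : F) (hw : B x1 - b = w) (hdd : B u - B x1 = dd) :
    r1 ≤ ru + (c * ⟪w, dd⟫_ℝ + ⟪u - x1, M (x1 - x₀)⟫_ℝ) := by
  subst hw hdd
  set d := u - x1 with hd
  set w1 := B x1 - b with hw1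
  set w2 := x1 - x₀ with hw2
  have hBd : B u - B x1 = B d := by rw [hd, map_sub]
  rw [hBd]
  have hK : 0 ≤ (c/2) * ‖B d‖ ^ 2 + (1/2) * opSq M d := by
    have := hM.2 d
    have : 0 ≤ opSq M d := this
    positivity
  refine le_of_forall_t hK fun t ht ht1 => ?_
  set v := x1 + t • d with hv
  -- convexity bound
  have hconv : f v ≤ (((1 - t) * r1 + t * ru : ℝ) : EReal) := by
    have hvv : v = (1 - t) • x1 + t • u := by
      rw [hv, hd]; rw [sub_smul, one_smul, smul_sub]; abel
    rw [hvv]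
    calc f ((1 - t) • x1 + t • u) ≤ ((1 - t : ℝ) : EReal) * f x1 + (t : EReal) * f u :=
          hfc x1 u (1 - t) t (by linarith) ht.le (by ring)
    _ = (((1 - t) * r1 + t * ru : ℝ) : EReal) := by
        rw [h1, hu, EReal.coe_add, EReal.coe_mul, EReal.coe_mul]
  -- quadratic expansions
  have hq1 : ‖B v - b‖ ^ 2 = ‖w1‖ ^ 2 + 2 * t * ⟪w1, B d⟫_ℝ + t ^ 2 * ‖B d‖ ^ 2 := by
    have : B v - b = w1 + t • B d := by rw [hv, map_add, map_smul, hw1]; abel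
    rw [this, norm_add_sq_real, real_inner_smul_right, norm_smul]
    simp only [Real.norm_eq_abs, mul_pow, sq_abs]
    ring
  have hsymm : ⟪w2, M d⟫_ℝ = ⟪d, M w2⟫_ℝ := by
    rw [real_inner_comm, hM.1 d w2]
  have hq2 : opSq M (v - x₀) = opSq M w2 + 2 * t * ⟪d, M w2⟫_ℝ + t ^ 2 * opSq M d := by
    have hvx : v - x₀ = w2 + t • d := by rw [hv, hw2]; abel
    rw [hvx]
    unfold opSq
    rw [map_add, map_smul, inner_add_left, inner_add_right, inner_add_right,
      real_inner_smul_left, real_inner_smul_right, real_inner_smul_left,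
      real_inner_smul_right, hsymm]
    ring
  -- chain
  have hchain := (hmin v).trans (add_le_add_left hconv _)
  rw [h1, ← EReal.coe_add, ← EReal.coe_add] at hchain
  rw [EReal.coe_le_coe_iff] at hchain
  rw [hq1, hq2] at hchain
  have hlin : t * r1 ≤ t * (ru + (c * ⟪w1, B d⟫_ℝ + ⟪d, M w2⟫_ℝ)
      + t * ((c/2) * ‖B d‖ ^ 2 + (1/2) * opSq M d)) := by nlinarith [hchain]
  exact le_of_mul_le_mul_left (by linarith [hlin]) ht

end Aux
section Aux2
variable {E F : Type*} [NormedAddCommGroup E] [InnerProductSpace ℝ E]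
  [NormedAddCommGroup F] [InnerProductSpace ℝ F]

lemma exists_real_of_le2 {a b : EReal} {s t : ℝ}
    (h : a + b + (s : EReal) ≤ (t : EReal)) (ha : a ≠ ⊥) (hb : b ≠ ⊥) :
    ∃ ra rb : ℝ, a = (ra : EReal) ∧ b = (rb : EReal) := by
  have hat : a ≠ ⊤ := by
    intro hT
    rw [hT, EReal.top_add_of_ne_bot hb, EReal.top_add_coe] at h
    exact ((EReal.coe_lt_top t : (t : EReal) < ⊤)).not_ge h
  have hbt : b ≠ ⊤ := by
    intro hT
    rw [hT, add_comm a, EReal.top_add_of_ne_bot ha, EReal.top_add_coe] at h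
    exact ((EReal.coe_lt_top t : (t : EReal) < ⊤)).not_ge h
  exact ⟨a.toReal, b.toReal, (EReal.coe_toReal hat ha).symm, (EReal.coe_toReal hbt hb).symm⟩

lemma polar {M : E →L[ℝ] E} (hM : ∀ p q : E, ⟪M p, q⟫_ℝ = ⟪p, M q⟫_ℝ) (a b s : E) :
    2 * ⟪a - s, M (a - b)⟫_ℝ = opSq M (s - a) - opSq M (s - b) + opSq M (a - b) := by
  have hsym : ∀ p q : E, ⟪p, M q⟫_ℝ = ⟪q, M p⟫_ℝ := fun p q => by
    rw [← hM p q, real_inner_comm]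
  unfold opSq
  simp only [map_sub, inner_sub_left, inner_sub_right]
  rw [hsym s a, hsym s b, hsym b a]
  ring

lemma polar_id (a b s : E) :
    2 * ⟪a - s, a - b⟫_ℝ = ‖s - a‖ ^ 2 - ‖s - b‖ ^ 2 + ‖a - b‖ ^ 2 := by
  rw [← real_inner_self_eq_norm_sq, ← real_inner_self_eq_norm_sq, ← real_inner_self_eq_norm_sq]
  simp only [inner_sub_left, inner_sub_right]
  rw [real_inner_comm s a, real_inner_comm s b, real_inner_comm b a]
  ring

lemma psd_cs {M : E →L[ℝ] E} (hM : IsSplusOp M) (p q : E) :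
    2 * ⟪p, M q⟫_ℝ ≤ opSq M p + opSq M q := by
  have h := hM.2 (p - q)
  have hsym : ⟪q, M p⟫_ℝ = ⟪p, M q⟫_ℝ := by rw [← hM.1 p q, real_inner_comm]
  unfold opSq
  simp only [map_sub, inner_sub_left, inner_sub_right] at h
  linarith [h, hsym]

end Aux2

section MainStep
variable {E F : Type*} [NormedAddCommGroup E] [InnerProductSpace ℝ E]
  [NormedAddCommGroup F] [InnerProductSpace ℝ F]

lemma main_step {f : E → EReal} {g : F → EReal}
    (hfp : ERealProper f) (hfc : ERealConvex f)
    (hgp : ERealProper g) (hgc : ERealConvex g)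
    (A : E →L[ℝ] F) {c : ℝ} (hc : 0 < c)
    {M₁ : E →L[ℝ] E} {M₂ : F →L[ℝ] F}
    (hM₁ : IsSplusOp M₁) (hM₂ : IsSplusOp M₂)
    (X X' xs : E) (Z₀ Z Z' zs Y₀ Y Y' ys : F)
    (hx : IsXUpdate f A c M₁ X Z Y X')
    (hz1 : IsZUpdate g c M₂ (A X') Z Y Z')
    (hz0 : IsZUpdate g c M₂ (A X) Z₀ Y₀ Z)
    (hy1 : Y' = Y + c • (A X' - Z'))
    (hy0 : Y = Y₀ + c • (A X - Z))
    (hsp : IsSaddle (Lagr f g A) xs zs ys) :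
    opSq M₁ (X' - X) + opSq M₂ (Z' - Z) + c⁻¹ * ‖Y' - Y‖ ^ 2
      + opSq M₁ (xs - X')
      + opSq (M₂ + c • ContinuousLinearMap.id ℝ F) (zs - Z')
      + c⁻¹ * ‖ys - Y'‖ ^ 2 + opSq M₂ (Z' - Z) ≤
    opSq M₁ (xs - X) + opSq (M₂ + c • ContinuousLinearMap.id ℝ F) (zs - Z)
      + c⁻¹ * ‖ys - Y‖ ^ 2 + opSq M₂ (Z - Z₀) := by
  have hcne : c ≠ 0 := hc.ne'
  -- real values of f, g at relevant points
  obtain ⟨u₀, hu₀⟩ := hfp.2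
  obtain ⟨w₀, hw₀⟩ := hgp.2
  have hfu₀ : f u₀ = ((f u₀).toReal : EReal) := (EReal.coe_toReal hu₀ (hfp.1 u₀)).symm
  have hgw₀ : g w₀ = ((g w₀).toReal : EReal) := (EReal.coe_toReal hw₀ (hgp.1 w₀)).symm
  have h1 := hx u₀
  rw [hfu₀, ← EReal.coe_add] at h1
  obtain ⟨rX, hfX, -⟩ := exists_real_of_le h1 (hfp.1 X')
  have h2 := hz1 w₀
  rw [hgw₀, ← EReal.coe_add] at h2
  obtain ⟨rZ', hgZ', -⟩ := exists_real_of_le h2 (hgp.1 Z')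
  have h3 := hz0 w₀
  rw [hgw₀, ← EReal.coe_add] at h3
  obtain ⟨rZ, hgZ, -⟩ := exists_real_of_le h3 (hgp.1 Z)
  -- saddle point values
  obtain ⟨rf, rg, hfxs, hgzs⟩ : ∃ ra rb : ℝ, f xs = (ra : EReal) ∧ g zs = (rb : EReal) := by
    have h := (hsp u₀ w₀ ys).2
    unfold Lagr at h
    rw [hfu₀, hgw₀, ← EReal.coe_add, ← EReal.coe_add] at h
    exact exists_real_of_le2 h (hfp.1 xs) (hgp.1 zs)
  -- A xs = zs
  have hAxs : A xs = zs := by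
    have h := (hsp u₀ w₀ (ys + (A xs - zs))).1
    unfold Lagr at h
    rw [hfxs, hgzs] at h
    norm_cast at h
    rw [inner_add_left] at h
    have : ⟪A xs - zs, A xs - zs⟫_ℝ ≤ 0 := by linarith
    exact sub_eq_zero.mp (real_inner_self_nonpos.mp this)
  -- vector identities
  have hv2 : A X' - Z' = c⁻¹ • (Y' - Y) := by
    rw [show Y' - Y = c • (A X' - Z') from by rw [hy1]; abel,
      smul_smul, inv_mul_cancel₀ hcne, one_smul]
  have hbx : A X' - (Z - c⁻¹ • Y) = c⁻¹ • Y' + (Z' - Z) := by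
    rw [hy1, smul_add, smul_smul, inv_mul_cancel₀ hcne, one_smul]; abel
  have hddx : A xs - A X' = zs - Z' - c⁻¹ • (Y' - Y) := by rw [hAxs, ← hv2]; abel
  -- VI from the x-update at xs
  have hminx : ∀ v : E,
      f X' + (((c/2) * ‖A X' - (Z - c⁻¹ • Y)‖ ^ 2 + (1/2) * opSq M₁ (X' - X) : ℝ) : EReal) ≤
      f v + (((c/2) * ‖A v - (Z - c⁻¹ • Y)‖ ^ 2 + (1/2) * opSq M₁ (v - X) : ℝ) : EReal) := by
    intro v
    have e : ∀ u : E, A u - (Z - c⁻¹ • Y) = A u - Z + c⁻¹ • Y := fun u => by abel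
    rw [e X', e v]
    exact hx v
  have I1 := key_vi hfc A (Z - c⁻¹ • Y) hc hM₁ X X' xs hfX hfxs hminx
    (c⁻¹ • Y' + (Z' - Z)) (zs - Z' - c⁻¹ • (Y' - Y)) hbx hddx
  -- VI from the z-update (current step)
  have e1 : ∀ w : F, (-(ContinuousLinearMap.id ℝ F)) w - (-(A X' + c⁻¹ • Y))
      = A X' - w + c⁻¹ • Y := by
    intro w
    simp only [ContinuousLinearMap.neg_apply, ContinuousLinearMap.id_apply]
    abel
  have hminz1 : ∀ v : F,
      g Z' + (((c/2) * ‖(-(ContinuousLinearMap.id ℝ F)) Z' - (-(A X' + c⁻¹ • Y))‖ ^ 2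
        + (1/2) * opSq M₂ (Z' - Z) : ℝ) : EReal) ≤
      g v + (((c/2) * ‖(-(ContinuousLinearMap.id ℝ F)) v - (-(A X' + c⁻¹ • Y))‖ ^ 2
        + (1/2) * opSq M₂ (v - Z) : ℝ) : EReal) := by
    intro v
    rw [e1 Z', e1 v]
    exact hz1 v
  have hbz1 : (-(ContinuousLinearMap.id ℝ F)) Z' - (-(A X' + c⁻¹ • Y)) = c⁻¹ • Y' := by
    rw [e1 Z', hy1, smul_add, smul_smul, inv_mul_cancel₀ hcne, one_smul]; abel
  have hddz : ∀ u : F, (-(ContinuousLinearMap.id ℝ F)) u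
      - (-(ContinuousLinearMap.id ℝ F)) Z' = Z' - u := by
    intro u
    simp only [ContinuousLinearMap.neg_apply, ContinuousLinearMap.id_apply]
    abel
  have I2 := key_vi hgc (-(ContinuousLinearMap.id ℝ F)) (-(A X' + c⁻¹ • Y)) hc hM₂
    Z Z' zs hgZ' hgzs hminz1 (c⁻¹ • Y') (Z' - zs) hbz1 (hddz zs)
  have I2b := key_vi hgc (-(ContinuousLinearMap.id ℝ F)) (-(A X' + c⁻¹ • Y)) hc hM₂
    Z Z' Z hgZ' hgZ hminz1 (c⁻¹ • Y') (Z' - Z) hbz1 (hddz Z)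
  -- VI from the previous z-update
  have e0 : ∀ w : F, (-(ContinuousLinearMap.id ℝ F)) w - (-(A X + c⁻¹ • Y₀))
      = A X - w + c⁻¹ • Y₀ := by
    intro w
    simp only [ContinuousLinearMap.neg_apply, ContinuousLinearMap.id_apply]
    abel
  have hminz0 : ∀ v : F,
      g Z + (((c/2) * ‖(-(ContinuousLinearMap.id ℝ F)) Z - (-(A X + c⁻¹ • Y₀))‖ ^ 2
        + (1/2) * opSq M₂ (Z - Z₀) : ℝ) : EReal) ≤
      g v + (((c/2) * ‖(-(ContinuousLinearMap.id ℝ F)) v - (-(A X + c⁻¹ • Y₀))‖ ^ 2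
        + (1/2) * opSq M₂ (v - Z₀) : ℝ) : EReal) := by
    intro v
    rw [e0 Z, e0 v]
    exact hz0 v
  have hbz0 : (-(ContinuousLinearMap.id ℝ F)) Z - (-(A X + c⁻¹ • Y₀)) = c⁻¹ • Y := by
    rw [e0 Z, hy0, smul_add, smul_smul, inv_mul_cancel₀ hcne, one_smul]; abel
  have hddz0 : (-(ContinuousLinearMap.id ℝ F)) Z'
      - (-(ContinuousLinearMap.id ℝ F)) Z = Z - Z' := by
    simp only [ContinuousLinearMap.neg_apply, ContinuousLinearMap.id_apply]
    abel
  have I2c := key_vi hgc (-(ContinuousLinearMap.id ℝ F)) (-(A X + c⁻¹ • Y₀)) hc hM₂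
    Z₀ Z Z' hgZ hgZ' hminz0 (c⁻¹ • Y) (Z - Z') hbz0 hddz0
  -- saddle point inequality at (X', Z')
  have I3 : rf + rg ≤ rX + rZ' + c⁻¹ * ⟪ys, Y' - Y⟫_ℝ := by
    have h := (hsp X' Z' ys).2
    unfold Lagr at h
    rw [hfxs, hgzs, hfX, hgZ', show A xs - zs = 0 from sub_eq_zero.mpr hAxs,
      inner_zero_right, hv2, real_inner_smul_right] at h
    norm_cast at h
    linarith
  -- monotonicity consequence
  have hBneg : ⟪Z - Z', M₂ (Z' - Z)⟫_ℝ = -(opSq M₂ (Z' - Z)) := by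
    rw [show Z - Z' = -(Z' - Z) from by abel, inner_neg_left]
    simp only [opSq]
  have hcross : c * ⟪c⁻¹ • Y', Z' - Z⟫_ℝ + c * ⟪c⁻¹ • Y, Z - Z'⟫_ℝ
      = ⟪Z' - Z, Y' - Y⟫_ℝ := by
    simp only [real_inner_smul_left, inner_sub_left, inner_sub_right]
    rw [real_inner_comm Z' Y', real_inner_comm Z Y', real_inner_comm Z' Y,
      real_inner_comm Z Y]
    field_simp
    ring
  have mono : opSq M₂ (Z' - Z) - ⟪Z' - Z, M₂ (Z - Z₀)⟫_ℝ ≤ ⟪Z' - Z, Y' - Y⟫_ℝ := by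
    linarith [I2b, I2c, hcross, hBneg]
  -- the master inequality
  have hsum : 0 ≤ (c * ⟪c⁻¹ • Y' + (Z' - Z), zs - Z' - c⁻¹ • (Y' - Y)⟫_ℝ
      + ⟪xs - X', M₁ (X' - X)⟫_ℝ)
      + (c * ⟪c⁻¹ • Y', Z' - zs⟫_ℝ + ⟪zs - Z', M₂ (Z' - Z)⟫_ℝ)
      + c⁻¹ * ⟪ys, Y' - Y⟫_ℝ := by linarith [I1, I2, I3]
  have hEq : (c * ⟪c⁻¹ • Y' + (Z' - Z), zs - Z' - c⁻¹ • (Y' - Y)⟫_ℝ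
      + ⟪xs - X', M₁ (X' - X)⟫_ℝ)
      + (c * ⟪c⁻¹ • Y', Z' - zs⟫_ℝ + ⟪zs - Z', M₂ (Z' - Z)⟫_ℝ)
      + c⁻¹ * ⟪ys, Y' - Y⟫_ℝ
      = -(⟪X' - xs, M₁ (X' - X)⟫_ℝ + ⟪Z' - zs, M₂ (Z' - Z)⟫_ℝ
        + c * ⟪Z' - zs, Z' - Z⟫_ℝ + c⁻¹ * ⟪Y' - ys, Y' - Y⟫_ℝ
        + ⟪Z' - Z, Y' - Y⟫_ℝ) := by
    simp only [inner_add_left, inner_add_right, inner_sub_left, inner_sub_right,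
      real_inner_smul_left, real_inner_smul_right]
    rw [real_inner_comm zs Z', real_inner_comm zs Z, real_inner_comm Z Z']
    field_simp
    ring
  have star : ⟪X' - xs, M₁ (X' - X)⟫_ℝ + ⟪Z' - zs, M₂ (Z' - Z)⟫_ℝ
      + c * ⟪Z' - zs, Z' - Z⟫_ℝ + c⁻¹ * ⟪Y' - ys, Y' - Y⟫_ℝ
      + ⟪Z' - Z, Y' - Y⟫_ℝ ≤ 0 := by linarith [hsum, hEq]
  -- polarization identities and conclusion
  have P1 := polar hM₁.1 X' X xs
  have P2 := polar hM₂.1 Z' Z zs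
  have P3' : c * (2 * ⟪Z' - zs, Z' - Z⟫_ℝ)
      = c * (‖zs - Z'‖ ^ 2 - ‖zs - Z‖ ^ 2 + ‖Z' - Z‖ ^ 2) := by rw [polar_id]
  have P4' : c⁻¹ * (2 * ⟪Y' - ys, Y' - Y⟫_ℝ)
      = c⁻¹ * (‖ys - Y'‖ ^ 2 - ‖ys - Y‖ ^ 2 + ‖Y' - Y‖ ^ 2) := by rw [polar_id]
  have CS := psd_cs hM₂ (Z' - Z) (Z - Z₀)
  have hsplit : ∀ v : F, opSq (M₂ + c • ContinuousLinearMap.id ℝ F) v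
      = opSq M₂ v + c * ‖v‖ ^ 2 := by
    intro v
    simp only [opSq, ContinuousLinearMap.add_apply, ContinuousLinearMap.smul_apply,
      ContinuousLinearMap.id_apply, inner_add_right, real_inner_smul_right,
      real_inner_self_eq_norm_sq]
  have hnn : 0 ≤ c * ‖Z' - Z‖ ^ 2 := by positivity
  rw [hsplit (zs - Z'), hsplit (zs - Z)]
  linarith [star, mono, CS, P1, P2, P3', P4', hnn]

end MainStep

theorem stmt2 (n m : ℕ)
    (f : EuclideanSpace ℝ (Fin n) → EReal) (g : EuclideanSpace ℝ (Fin m) → EReal)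
    (hfp : ERealProper f) (hfc : ERealConvex f) (hfl : LowerSemicontinuous f)
    (hgp : ERealProper g) (hgc : ERealConvex g) (hgl : LowerSemicontinuous g)
    (A : EuclideanSpace ℝ (Fin n) →L[ℝ] EuclideanSpace ℝ (Fin m))
    (c : ℝ) (hc : 0 < c)
    (M₁ : EuclideanSpace ℝ (Fin n) →L[ℝ] EuclideanSpace ℝ (Fin n))
    (M₂ : EuclideanSpace ℝ (Fin m) →L[ℝ] EuclideanSpace ℝ (Fin m))
    (hM₁ : IsSplusOp M₁) (hM₂ : IsSplusOp M₂)
    (x : ℕ → EuclideanSpace ℝ (Fin n)) (z y : ℕ → EuclideanSpace ℝ (Fin m))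
    (hx : ∀ k : ℕ, IsXUpdate f A c M₁ (x k) (z k) (y k) (x (k+1)))
    (hz : ∀ k : ℕ, IsZUpdate g c M₂ (A (x (k+1))) (z k) (y k) (z (k+1)))
    (hy : ∀ k : ℕ, y (k+1) = y k + c • (A (x (k+1)) - z (k+1)))
    (xs : EuclideanSpace ℝ (Fin n)) (zs ys : EuclideanSpace ℝ (Fin m))
    (hsp : IsSaddle (Lagr f g A) xs zs ys) :
    ∀ k : ℕ, 1 ≤ k →
      opSq M₁ (x (k+1) - x k) + opSq M₂ (z (k+1) - z k) + c⁻¹ * ‖y (k+1) - y k‖ ^ 2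
        + opSq M₁ (xs - x (k+1))
        + opSq (M₂ + c • ContinuousLinearMap.id ℝ (EuclideanSpace ℝ (Fin m))) (zs - z (k+1))
        + c⁻¹ * ‖ys - y (k+1)‖ ^ 2 + opSq M₂ (z (k+1) - z k) ≤
      opSq M₁ (xs - x k)
        + opSq (M₂ + c • ContinuousLinearMap.id ℝ (EuclideanSpace ℝ (Fin m))) (zs - z k)
        + c⁻¹ * ‖ys - y k‖ ^ 2 + opSq M₂ (z k - z (k-1)) := by
  intro k hk
  obtain ⟨j, rfl⟩ : ∃ j, k = j + 1 := ⟨k - 1, (Nat.succ_pred_eq_of_pos hk).symm⟩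
  simp only [Nat.add_sub_cancel]
  exact main_step hfp hfc hgp hgc A hc hM₁ hM₂ (x (j + 1)) (x (j + 1 + 1)) xs
    (z j) (z (j + 1)) (z (j + 1 + 1)) zs (y j) (y (j + 1)) (y (j + 1 + 1)) ys
    (hx (j + 1)) (hz (j + 1)) (hz j) (hy (j + 1)) (hy j) hsp
end
end

section
/- Assume M₂ is positive definite and the Lagrangian l has a saddle point (x*, z*, y*). Let (xᵏ, zᵏ, yᵏ)_{k≥0} be a sequence generated by the AD-PMM algorithm. Then Σ_{k≥1} ‖z^{k+1} − zᵏ‖² < +∞, and there exists C ≥ 0 such that ‖Axᵏ − zᵏ‖ ≤ C/√k for all k ≥ 1. -/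
open scoped InnerProductSpace
open Filter

noncomputable section

section AuxProofs

variable {E F : Type*} [NormedAddCommGroup E] [InnerProductSpace ℝ E]
  [NormedAddCommGroup F] [InnerProductSpace ℝ F]

lemma qexp (T : E →L[ℝ] F) (M : E →L[ℝ] E) (hM : ∀ v w : E, ⟪v, M w⟫_ℝ = ⟪w, M v⟫_ℝ)
    (c t : ℝ) (b : F) (a xp d : E) :
    (c/2) * ‖T (xp + t • d) - b‖^2 + (1/2) * opSq M (xp + t • d - a)
      = ((c/2) * ‖T xp - b‖^2 + (1/2) * opSq M (xp - a))
        + t * (c * ⟪T xp - b, T d⟫_ℝ + ⟪xp - a, M d⟫_ℝ)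
        + t^2/2 * (c * ‖T d‖^2 + opSq M d) := by
  simp only [opSq, map_add, map_sub, map_smul, ← real_inner_self_eq_norm_sq,
    inner_sub_left, inner_sub_right, inner_add_left, inner_add_right,
    real_inner_smul_left, real_inner_smul_right, hM, real_inner_comm]
  ring

lemma strongMin (f : E → EReal) (hfp : ERealProper f) (hfc : ERealConvex f)
    (T : E →L[ℝ] F) (c : ℝ) (hc : 0 < c) (M : E →L[ℝ] E) (hM : IsSplusOp M)
    (b : F) (a xp : E)
    (hmin : ∀ u : E, f xp + (((c/2) * ‖T xp - b‖^2 + (1/2) * opSq M (xp - a) : ℝ) : EReal)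
        ≤ f u + (((c/2) * ‖T u - b‖^2 + (1/2) * opSq M (u - a) : ℝ) : EReal)) :
    (∃ p : ℝ, f xp = (p : EReal)) ∧
    ∀ (u : E) (pu px : ℝ), f u = (pu : EReal) → f xp = (px : EReal) →
      px + ((c/2) * ‖T xp - b‖^2 + (1/2) * opSq M (xp - a))
        + ((c/2) * ‖T (u - xp)‖^2 + (1/2) * opSq M (u - xp))
      ≤ pu + ((c/2) * ‖T u - b‖^2 + (1/2) * opSq M (u - a)) := by
  have hMs : ∀ v w : E, ⟪v, M w⟫_ℝ = ⟪w, M v⟫_ℝ := by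
    intro v w; rw [← hM.1, real_inner_comm]
  constructor
  · obtain ⟨u₀, hu₀⟩ := hfp.2
    have h := hmin u₀
    have hne : f xp ≠ ⊤ := by
      intro htop
      rw [htop] at h
      rw [EReal.top_add_of_ne_bot (EReal.coe_ne_bot _)] at h
      have h2 : f u₀ + (((c/2) * ‖T u₀ - b‖^2 + (1/2) * opSq M (u₀ - a) : ℝ) : EReal) ≠ ⊤ :=
        (EReal.add_lt_top hu₀ (EReal.coe_ne_top _)).ne
      exact h2 (top_le_iff.mp h)
    exact ⟨(f xp).toReal, (EReal.coe_toReal hne (hfp.1 xp)).symm⟩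
  · intro u pu px hu hpx
    set d := u - xp with hd
    have hSnn : 0 ≤ c * ‖T d‖^2 + opSq M d := by
      have h2 : (0:ℝ) ≤ opSq M d := hM.2 d
      positivity
    have key : ∀ t : ℝ, 0 < t → t ≤ 1 →
        0 ≤ (pu - px + (c * ⟪T xp - b, T d⟫_ℝ + ⟪xp - a, M d⟫_ℝ))
            + t/2 * (c * ‖T d‖^2 + opSq M d) := by
      intro t ht ht1
      have hcomb : xp + t • d = (1-t) • xp + t • u := by
        rw [hd, smul_sub, sub_smul, one_smul]; abel
      have hconv := hfc xp u (1-t) t (by linarith) (le_of_lt ht) (by ring)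
      rw [hu, hpx, ← EReal.coe_mul, ← EReal.coe_mul, ← EReal.coe_add] at hconv
      have hm := hmin (xp + t • d)
      rw [hpx] at hm
      have hchain : ((px : ℝ) : EReal) + (((c/2) * ‖T xp - b‖^2 + (1/2) * opSq M (xp - a) : ℝ) : EReal)
          ≤ ((((1-t) * px + t * pu) + ((c/2) * ‖T (xp + t • d) - b‖^2 + (1/2) * opSq M (xp + t • d - a)) : ℝ) : EReal) := by
        refine le_trans hm ?_
        rw [EReal.coe_add ((1-t) * px + t * pu)]
        rw [hcomb]
        exact add_le_add_left hconv _
      rw [← EReal.coe_add, EReal.coe_le_coe_iff] at hchain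
      rw [qexp T M hMs c t b a xp d] at hchain
      nlinarith [hchain]
    have hX : 0 ≤ pu - px + (c * ⟪T xp - b, T d⟫_ℝ + ⟪xp - a, M d⟫_ℝ) := by
      set X := pu - px + (c * ⟪T xp - b, T d⟫_ℝ + ⟪xp - a, M d⟫_ℝ) with hXdef
      set S := c * ‖T d‖^2 + opSq M d with hSdef
      by_contra hneg
      push_neg at hneg
      rcases eq_or_lt_of_le hSnn with hS0 | hSpos
      · have := key 1 one_pos le_rfl
        rw [← hS0] at this
        simp at this; linarith
      · have ht0 : 0 < min 1 ((-X)/S) := lt_min one_pos (div_pos (by linarith) hSpos)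
        have := key (min 1 ((-X)/S)) ht0 (min_le_left _ _)
        have h3 : (min 1 ((-X)/S))/2 * S ≤ ((-X)/S)/2 * S :=
          mul_le_mul_of_nonneg_right (by have := min_le_right 1 ((-X)/S); linarith)
            (le_of_lt hSpos)
        have h4 : ((-X)/S)/2 * S = (-X)/2 := by field_simp
        rw [h4] at h3
        linarith
    have hQu := qexp T M hMs c 1 b a xp d
    have hxu : xp + (1:ℝ) • d = u := by rw [hd, one_smul]; abel
    rw [hxu] at hQu
    nlinarith [hX, hQu]



set_option maxHeartbeats 4000000 in
lemma id1 (Mx : E →L[ℝ] E) (Mz : F →L[ℝ] F)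
    (hMxs : ∀ v w : E, ⟪v, Mx w⟫_ℝ = ⟪w, Mx v⟫_ℝ)
    (hMzs : ∀ v w : F, ⟪v, Mz w⟫_ℝ = ⟪w, Mz v⟫_ℝ)
    (c : ℝ) (hc : c ≠ 0) (a ah z zh zp zhp y yh : F) (x xh xp xhp : E) :
    (opSq Mx (x - xh) + c*‖z - zh‖^2 + opSq Mz (z - zh) + c⁻¹*‖y - yh‖^2)
      - (opSq Mx (xp - xhp) + c*‖zp - zhp‖^2 + opSq Mz (zp - zhp)
          + c⁻¹*‖(y + c • (a - zp)) - (yh + c • (ah - zhp))‖^2)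
      - c*‖a - ah - (z - zh)‖^2 - opSq Mx ((x - xh) - (xp - xhp))
      - opSq Mz ((z - zh) - (zp - zhp))
    = 2*( (((c/2) * ‖ah - (z - c⁻¹ • y)‖^2 + (1/2) * opSq Mx (xhp - x)))
        - (((c/2) * ‖a - (z - c⁻¹ • y)‖^2 + (1/2) * opSq Mx (xp - x)))
        - (((c/2) * ‖ah - a‖^2 + (1/2) * opSq Mx (xhp - xp)))
        + (((c/2) * ‖a - (zh - c⁻¹ • yh)‖^2 + (1/2) * opSq Mx (xp - xh)))
        - (((c/2) * ‖ah - (zh - c⁻¹ • yh)‖^2 + (1/2) * opSq Mx (xhp - xh)))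
        - (((c/2) * ‖a - ah‖^2 + (1/2) * opSq Mx (xp - xhp))) )
    + 2*( (((c/2) * ‖zhp - (a + c⁻¹ • y)‖^2 + (1/2) * opSq Mz (zhp - z)))
        - (((c/2) * ‖zp - (a + c⁻¹ • y)‖^2 + (1/2) * opSq Mz (zp - z)))
        - (((c/2) * ‖zhp - zp‖^2 + (1/2) * opSq Mz (zhp - zp)))
        + (((c/2) * ‖zp - (ah + c⁻¹ • yh)‖^2 + (1/2) * opSq Mz (zp - zh)))
        - (((c/2) * ‖zhp - (ah + c⁻¹ • yh)‖^2 + (1/2) * opSq Mz (zhp - zh)))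
        - (((c/2) * ‖zp - zhp‖^2 + (1/2) * opSq Mz (zp - zhp))) ) := by
  simp only [opSq, map_sub, map_add, map_smul, ← real_inner_self_eq_norm_sq,
    inner_sub_left, inner_sub_right, inner_add_left, inner_add_right,
    real_inner_smul_left, real_inner_smul_right, hMxs, hMzs, real_inner_comm]
  field_simp
  ring

lemma contraction (f : E → EReal) (g : F → EReal)
    (hfp : ERealProper f) (hfc : ERealConvex f)
    (hgp : ERealProper g) (hgc : ERealConvex g)
    (A : E →L[ℝ] F) (c : ℝ) (hc : 0 < c) (Mx : E →L[ℝ] E) (Mz : F →L[ℝ] F)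
    (hMx : IsSplusOp Mx) (hMz : IsSplusOp Mz)
    (x xp xh xhp : E) (z y zp yp zh yh zhp yhp : F)
    (hx1 : IsXUpdate f A c Mx x z y xp) (hz1 : IsZUpdate g c Mz (A xp) z y zp)
    (hy1 : yp = y + c • (A xp - zp))
    (hx2 : IsXUpdate f A c Mx xh zh yh xhp) (hz2 : IsZUpdate g c Mz (A xhp) zh yh zhp)
    (hy2 : yhp = yh + c • (A xhp - zhp)) :
    opSq Mx (xp - xhp) + c*‖zp - zhp‖^2 + opSq Mz (zp - zhp) + c⁻¹*‖yp - yhp‖^2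
      + c*‖A xp - A xhp - (z - zh)‖^2 + opSq Mx ((x - xh) - (xp - xhp))
      + opSq Mz ((z - zh) - (zp - zhp))
    ≤ opSq Mx (x - xh) + c*‖z - zh‖^2 + opSq Mz (z - zh) + c⁻¹*‖y - yh‖^2 := by
  have hMxs : ∀ v w : E, ⟪v, Mx w⟫_ℝ = ⟪w, Mx v⟫_ℝ := by
    intro v w; rw [← hMx.1, real_inner_comm]
  have hMzs : ∀ v w : F, ⟪v, Mz w⟫_ℝ = ⟪w, Mz v⟫_ℝ := by
    intro v w; rw [← hMz.1, real_inner_comm]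
  have e1 : ∀ (v zz yy : F), v - zz + c⁻¹ • yy = v - (zz - c⁻¹ • yy) := by
    intro v zz yy; abel
  have e2 : ∀ (w v yy : F), ‖v - w + c⁻¹ • yy‖ = ‖w - (v + c⁻¹ • yy)‖ := by
    intro w v yy
    rw [show v - w + c⁻¹ • yy = -(w - (v + c⁻¹ • yy)) by abel, norm_neg]
  have hminx1 : ∀ u : E, f xp + (((c/2) * ‖A xp - (z - c⁻¹ • y)‖^2 + (1/2) * opSq Mx (xp - x) : ℝ) : EReal)
      ≤ f u + (((c/2) * ‖A u - (z - c⁻¹ • y)‖^2 + (1/2) * opSq Mx (u - x) : ℝ) : EReal) := by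
    intro u; have h := hx1 u; simp only [e1] at h; exact h
  have hminx2 : ∀ u : E, f xhp + (((c/2) * ‖A xhp - (zh - c⁻¹ • yh)‖^2 + (1/2) * opSq Mx (xhp - xh) : ℝ) : EReal)
      ≤ f u + (((c/2) * ‖A u - (zh - c⁻¹ • yh)‖^2 + (1/2) * opSq Mx (u - xh) : ℝ) : EReal) := by
    intro u; have h := hx2 u; simp only [e1] at h; exact h
  have hminz1 : ∀ w : F, g zp + (((c/2) * ‖(ContinuousLinearMap.id ℝ F) zp - (A xp + c⁻¹ • y)‖^2 + (1/2) * opSq Mz (zp - z) : ℝ) : EReal)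
      ≤ g w + (((c/2) * ‖(ContinuousLinearMap.id ℝ F) w - (A xp + c⁻¹ • y)‖^2 + (1/2) * opSq Mz (w - z) : ℝ) : EReal) := by
    intro w; have h := hz1 w; simp only [e2] at h
    simpa only [ContinuousLinearMap.id_apply] using h
  have hminz2 : ∀ w : F, g zhp + (((c/2) * ‖(ContinuousLinearMap.id ℝ F) zhp - (A xhp + c⁻¹ • yh)‖^2 + (1/2) * opSq Mz (zhp - zh) : ℝ) : EReal)
      ≤ g w + (((c/2) * ‖(ContinuousLinearMap.id ℝ F) w - (A xhp + c⁻¹ • yh)‖^2 + (1/2) * opSq Mz (w - zh) : ℝ) : EReal) := by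
    intro w; have h := hz2 w; simp only [e2] at h
    simpa only [ContinuousLinearMap.id_apply] using h
  have S1 := strongMin f hfp hfc A c hc Mx hMx (z - c⁻¹ • y) x xp hminx1
  have S2 := strongMin f hfp hfc A c hc Mx hMx (zh - c⁻¹ • yh) xh xhp hminx2
  have S3 := strongMin g hgp hgc (ContinuousLinearMap.id ℝ F) c hc Mz hMz (A xp + c⁻¹ • y) z zp hminz1
  have S4 := strongMin g hgp hgc (ContinuousLinearMap.id ℝ F) c hc Mz hMz (A xhp + c⁻¹ • yh) zh zhp hminz2
  obtain ⟨px, hpx⟩ := S1.1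
  obtain ⟨pxh, hpxh⟩ := S2.1
  obtain ⟨pz, hpz⟩ := S3.1
  obtain ⟨pzh, hpzh⟩ := S4.1
  have I1 := S1.2 xhp pxh px hpxh hpx
  have I2 := S2.2 xp px pxh hpx hpxh
  have J1 := S3.2 zhp pzh pz hpzh hpz
  have J2 := S4.2 zp pz pzh hpz hpzh
  rw [map_sub] at I1 I2
  simp only [ContinuousLinearMap.id_apply] at J1 J2
  have ID := id1 Mx Mz hMxs hMzs c (ne_of_gt hc) (A xp) (A xhp) z zh zp zhp y yh x xh xp xhp
  rw [hy1, hy2]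
  linarith [ID, I1, I2, J1, J2]



lemma ereal_add_cancel {a b : EReal} (q : ℝ) (h : a + (q : EReal) ≤ b + (q : EReal)) :
    a ≤ b := by
  have h2 := add_le_add_left h (((-q) : ℝ) : EReal)
  rwa [add_assoc, ← EReal.coe_add, add_neg_cancel, EReal.coe_zero, add_zero,
       add_assoc, ← EReal.coe_add, add_neg_cancel, EReal.coe_zero, add_zero] at h2

lemma quad_lower (c : ℝ) (hc : 0 < c) (ys : F) :
    ∀ v : F, ⟪ys, v⟫_ℝ + (c/2) * ‖c⁻¹ • ys‖^2 ≤ (c/2) * ‖v + c⁻¹ • ys‖^2 := by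
  intro v
  have hcc : c * c⁻¹ = 1 := mul_inv_cancel₀ (ne_of_gt hc)
  have hexp : ‖v + c⁻¹ • ys‖^2 = ‖v‖^2 + 2*(c⁻¹*⟪v, ys⟫_ℝ) + ‖c⁻¹ • ys‖^2 := by
    rw [@norm_add_sq_real, real_inner_smul_right]
  rw [hexp]
  have h1 : 0 ≤ (c/2) * ‖v‖^2 := by positivity
  have h2 : ⟪ys, v⟫_ℝ = ⟪v, ys⟫_ℝ := real_inner_comm _ _
  have h3 : c/2 * (2 * (c⁻¹ * ⟪v, ys⟫_ℝ)) = ⟪v, ys⟫_ℝ := by field_simp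
  linarith [h1, h3]


end AuxProofs


set_option maxHeartbeats 1600000 in
theorem stmt3 (n m : ℕ)
    (f : EuclideanSpace ℝ (Fin n) → EReal) (g : EuclideanSpace ℝ (Fin m) → EReal)
    (hfp : ERealProper f) (hfc : ERealConvex f) (hfl : LowerSemicontinuous f)
    (hgp : ERealProper g) (hgc : ERealConvex g) (hgl : LowerSemicontinuous g)
    (A : EuclideanSpace ℝ (Fin n) →L[ℝ] EuclideanSpace ℝ (Fin m))
    (c : ℝ) (hc : 0 < c)
    (M₁ : EuclideanSpace ℝ (Fin n) →L[ℝ] EuclideanSpace ℝ (Fin n))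
    (M₂ : EuclideanSpace ℝ (Fin m) →L[ℝ] EuclideanSpace ℝ (Fin m))
    (hM₁ : IsSplusOp M₁) (hM₂ : IsSplusOp M₂)
    (x : ℕ → EuclideanSpace ℝ (Fin n)) (z y : ℕ → EuclideanSpace ℝ (Fin m))
    (hx : ∀ k : ℕ, IsXUpdate f A c M₁ (x k) (z k) (y k) (x (k+1)))
    (hz : ∀ k : ℕ, IsZUpdate g c M₂ (A (x (k+1))) (z k) (y k) (z (k+1)))
    (hy : ∀ k : ℕ, y (k+1) = y k + c • (A (x (k+1)) - z (k+1)))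
    (hM₂pd : ∀ w : EuclideanSpace ℝ (Fin m), w ≠ 0 → 0 < ⟪w, M₂ w⟫_ℝ)
    (xs : EuclideanSpace ℝ (Fin n)) (zs ys : EuclideanSpace ℝ (Fin m))
    (hsp : IsSaddle (Lagr f g A) xs zs ys) :
    Summable (fun k : ℕ => ‖z (k+2) - z (k+1)‖ ^ 2) ∧
    ∃ C : ℝ, 0 ≤ C ∧ ∀ k : ℕ, 1 ≤ k → ‖A (x k) - z k‖ ≤ C / Real.sqrt (k : ℝ) := by
  classical
  have hop1 : ∀ v, 0 ≤ opSq M₁ v := fun v => hM₁.2 v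
  have hop2 : ∀ v, 0 ≤ opSq M₂ v := fun v => hM₂.2 v
  -- finiteness of f xs, g zs
  obtain ⟨u₀, hu₀⟩ := hfp.2
  obtain ⟨w₀, hw₀⟩ := hgp.2
  have hs2 := (hsp u₀ w₀ ys).2
  simp only [Lagr] at hs2
  have hRne : f u₀ + g w₀ + ((⟪ys, A u₀ - w₀⟫_ℝ : ℝ) : EReal) ≠ ⊤ :=
    (EReal.add_lt_top ((EReal.add_lt_top hu₀ hw₀).ne) (EReal.coe_ne_top _)).ne
  have hLne : f xs + g zs + ((⟪ys, A xs - zs⟫_ℝ : ℝ) : EReal) ≠ ⊤ := fun h => hRne (top_le_iff.mp (h ▸ hs2))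
  have hfxs_ne : f xs ≠ ⊤ := by
    intro h
    apply hLne
    rw [h, EReal.top_add_of_ne_bot (hgp.1 zs), EReal.top_add_of_ne_bot (EReal.coe_ne_bot _)]
  have hgzs_ne : g zs ≠ ⊤ := by
    intro h
    apply hLne
    rw [h, EReal.add_top_of_ne_bot (hfp.1 xs), EReal.top_add_of_ne_bot (EReal.coe_ne_bot _)]
  set ps : ℝ := (f xs).toReal with hps
  set qs : ℝ := (g zs).toReal with hqs
  have hfxs : f xs = (ps : EReal) := (EReal.coe_toReal hfxs_ne (hfp.1 xs)).symm
  have hgzs : g zs = (qs : EReal) := (EReal.coe_toReal hgzs_ne (hgp.1 zs)).symm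
  -- A xs = zs
  have hAzs0 : A xs - zs = 0 := by
    have h1 := (hsp xs zs (ys + (A xs - zs))).1
    simp only [Lagr, hfxs, hgzs, ← EReal.coe_add, EReal.coe_le_coe_iff] at h1
    rw [inner_add_left] at h1
    have h2 : ⟪A xs - zs, A xs - zs⟫_ℝ ≤ 0 := by linarith
    exact real_inner_self_nonpos.mp h2
  have hAxs : A xs = zs := sub_eq_zero.mp hAzs0
  have hopz1 : opSq M₁ (0 : EuclideanSpace ℝ (Fin n)) = 0 := by simp [opSq]
  have hopz2 : opSq M₂ (0 : EuclideanSpace ℝ (Fin m)) = 0 := by simp [opSq]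
  -- the saddle point is a fixed point of the updates
  have hxs_upd : IsXUpdate f A c M₁ xs zs ys xs := by
    intro u
    have h := (hsp u zs ys).2
    simp only [Lagr, hgzs] at h
    rw [hAzs0, inner_zero_right] at h
    have h' : f xs + ((0:ℝ) : EReal) ≤ f u + ((⟪ys, A u - zs⟫_ℝ : ℝ) : EReal) := by
      have hre : ∀ (a : EReal) (s : ℝ), a + (qs : EReal) + (s : EReal) = a + (s : EReal) + (qs : EReal) := by
        intro a s; rw [add_assoc, add_assoc, add_comm ((qs : EReal)) ((s : EReal))]
      rw [hre (f xs) 0, hre (f u) _] at h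
      exact ereal_add_cancel qs h
    rw [hAzs0, zero_add, sub_self, hopz1]
    have hq : ∀ w : EuclideanSpace ℝ (Fin n),
        ((c/2) * ‖A w - zs + c⁻¹ • ys‖^2 + (1/2) * opSq M₁ (w - xs) : ℝ)
        ≥ ⟪ys, A w - zs⟫_ℝ + ((c/2) * ‖c⁻¹ • ys‖^2 + (1/2) * 0) := by
      intro w
      have := quad_lower c hc ys (A w - zs)
      have h2 := hop1 (w - xs)
      linarith
    calc f xs + (((c/2) * ‖c⁻¹ • ys‖ ^ 2 + 1/2 * 0 : ℝ) : EReal)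
        = (f xs + ((0:ℝ) : EReal)) + (((c/2) * ‖c⁻¹ • ys‖ ^ 2 + 1/2 * 0 : ℝ) : EReal) := by
          rw [EReal.coe_zero, add_zero]
      _ ≤ (f u + ((⟪ys, A u - zs⟫_ℝ : ℝ) : EReal)) + (((c/2) * ‖c⁻¹ • ys‖ ^ 2 + 1/2 * 0 : ℝ) : EReal) :=
          add_le_add_left h' _
      _ = f u + ((⟪ys, A u - zs⟫_ℝ + ((c/2) * ‖c⁻¹ • ys‖ ^ 2 + 1/2 * 0) : ℝ) : EReal) := by
          rw [add_assoc, ← EReal.coe_add]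
      _ ≤ f u + (((c/2) * ‖A u - zs + c⁻¹ • ys‖ ^ 2 + 1/2 * opSq M₁ (u - xs) : ℝ) : EReal) := by
          apply add_le_add_right
          exact EReal.coe_le_coe_iff.mpr (hq u)
  have hzs_upd : IsZUpdate g c M₂ (A xs) zs ys zs := by
    intro w
    have h := (hsp xs w ys).2
    simp only [Lagr, hfxs] at h
    rw [hAzs0, inner_zero_right] at h
    have h' : g zs + ((0:ℝ) : EReal) ≤ g w + ((⟪ys, A xs - w⟫_ℝ : ℝ) : EReal) := by
      have hre : ∀ (a : EReal) (s : EReal), ((ps : ℝ) : EReal) + a + s = a + s + ((ps : ℝ) : EReal) := by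
        intro a s; rw [add_comm (((ps : ℝ) : EReal)) a, add_assoc, add_assoc, add_comm (((ps:ℝ)):EReal) s]
      rw [hre (g zs) _, hre (g w) _] at h
      exact ereal_add_cancel ps h
    rw [hAxs, sub_self, zero_add, hopz2]
    have hq : ∀ v : EuclideanSpace ℝ (Fin m),
        ((c/2) * ‖zs - v + c⁻¹ • ys‖^2 + (1/2) * opSq M₂ (v - zs) : ℝ)
        ≥ ⟪ys, zs - v⟫_ℝ + ((c/2) * ‖c⁻¹ • ys‖^2 + (1/2) * 0) := by
      intro v
      have := quad_lower c hc ys (zs - v)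
      have h2 := hop2 (v - zs)
      linarith
    have hAw : ⟪ys, A xs - w⟫_ℝ = ⟪ys, zs - w⟫_ℝ := by rw [hAxs]
    calc g zs + (((c/2) * ‖c⁻¹ • ys‖ ^ 2 + 1/2 * 0 : ℝ) : EReal)
        = (g zs + ((0:ℝ) : EReal)) + (((c/2) * ‖c⁻¹ • ys‖ ^ 2 + 1/2 * 0 : ℝ) : EReal) := by
          rw [EReal.coe_zero, add_zero]
      _ ≤ (g w + ((⟪ys, A xs - w⟫_ℝ : ℝ) : EReal)) + (((c/2) * ‖c⁻¹ • ys‖ ^ 2 + 1/2 * 0 : ℝ) : EReal) :=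
          add_le_add_left h' _
      _ = g w + ((⟪ys, zs - w⟫_ℝ + ((c/2) * ‖c⁻¹ • ys‖ ^ 2 + 1/2 * 0) : ℝ) : EReal) := by
          rw [add_assoc, ← EReal.coe_add, hAw]
      _ ≤ g w + (((c/2) * ‖zs - w + c⁻¹ • ys‖ ^ 2 + 1/2 * opSq M₂ (w - zs) : ℝ) : EReal) := by
          apply add_le_add_right
          exact EReal.coe_le_coe_iff.mpr (hq w)
  have hys_upd : ys = ys + c • (A xs - zs) := by rw [hAzs0, smul_zero, add_zero]
  -- Lyapunov and difference quantities
  set V : ℕ → ℝ := fun k => opSq M₁ (x k - xs) + c*‖z k - zs‖^2 + opSq M₂ (z k - zs)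
      + c⁻¹*‖y k - ys‖^2 with hV
  set Ek : ℕ → ℝ := fun k => opSq M₁ (x k - x (k+1)) + c*‖z k - z (k+1)‖^2
      + opSq M₂ (z k - z (k+1)) + c⁻¹*‖y k - y (k+1)‖^2 with hEk
  clear_value V Ek
  -- Fejér inequality
  have hF : ∀ k : ℕ, V (k+1) + c*‖A (x (k+1)) - z k‖^2 + opSq M₁ (x k - x (k+1))
      + opSq M₂ (z k - z (k+1)) ≤ V k := by
    intro k
    have hcon := contraction f g hfp hfc hgp hgc A c hc M₁ M₂ hM₁ hM₂
      (x k) (x (k+1)) xs xs (z k) (y k) (z (k+1)) (y (k+1)) zs ys zs ys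
      (hx k) (hz k) (hy k) hxs_upd hzs_upd hys_upd
    have e1 : A (x (k+1)) - A xs - (z k - zs) = A (x (k+1)) - z k := by rw [hAxs]; abel
    have e2 : (x k - xs) - (x (k+1) - xs) = x k - x (k+1) := by abel
    have e3 : (z k - zs) - (z (k+1) - zs) = z k - z (k+1) := by abel
    rw [e1, e2, e3] at hcon
    have h4 : 0 ≤ c*‖z (k+1) - zs‖^2 := by positivity
    simp only [hV]
    linarith [hcon]
  -- monotonicity of Ek
  have hMono : ∀ k : ℕ, Ek (k+1) ≤ Ek k := by
    intro k
    have hcon := contraction f g hfp hfc hgp hgc A c hc M₁ M₂ hM₁ hM₂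
      (x k) (x (k+1)) (x (k+1)) (x (k+2)) (z k) (y k) (z (k+1)) (y (k+1))
      (z (k+1)) (y (k+1)) (z (k+2)) (y (k+2))
      (hx k) (hz k) (hy k) (hx (k+1)) (hz (k+1)) (hy (k+1))
    have h4 : 0 ≤ c*‖A (x (k+1)) - A (x (k+2)) - (z k - z (k+1))‖^2 := by positivity
    have h5 := hop1 ((x k - x (k+1)) - (x (k+1) - x (k+2)))
    have h6 := hop2 ((z k - z (k+1)) - (z (k+1) - z (k+2)))
    simp only [hEk]
    linarith [hcon]
  -- positive definiteness constant
  obtain ⟨lam, hlam0, hlam⟩ : ∃ lam : ℝ, 0 < lam ∧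
      ∀ w : EuclideanSpace ℝ (Fin m), lam * ‖w‖^2 ≤ opSq M₂ w := by
    by_cases htriv : ∀ w : EuclideanSpace ℝ (Fin m), w = 0
    · exact ⟨1, one_pos, fun w => by rw [htriv w]; simp [hopz2]⟩
    · push_neg at htriv
      obtain ⟨w1, hw1⟩ := htriv
      have hS : (Metric.sphere (0 : EuclideanSpace ℝ (Fin m)) 1).Nonempty := by
        refine ⟨‖w1‖⁻¹ • w1, ?_⟩
        simp [norm_smul, abs_of_pos (inv_pos.mpr (norm_pos_iff.mpr hw1)),
          inv_mul_cancel₀ (ne_of_gt (norm_pos_iff.mpr hw1))]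
      have hcont : ContinuousOn (fun w : EuclideanSpace ℝ (Fin m) => ⟪w, M₂ w⟫_ℝ)
          (Metric.sphere (0 : EuclideanSpace ℝ (Fin m)) 1) :=
        (continuous_id.inner M₂.continuous).continuousOn
      obtain ⟨w0, hw0S, hmin⟩ := IsCompact.exists_isMinOn
        (isCompact_sphere (0 : EuclideanSpace ℝ (Fin m)) 1) hS hcont
      have hw0n : ‖w0‖ = 1 := by simpa using hw0S
      have hw0 : w0 ≠ 0 := by intro h; rw [h] at hw0n; simp at hw0n
      refine ⟨⟪w0, M₂ w0⟫_ℝ, hM₂pd w0 hw0, ?_⟩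
      intro w
      by_cases hw : w = 0
      · simp [hw, hopz2]
      · have hnw : 0 < ‖w‖ := norm_pos_iff.mpr hw
        have hmem : ‖w‖⁻¹ • w ∈ Metric.sphere (0 : EuclideanSpace ℝ (Fin m)) 1 := by
          simp [norm_smul, abs_of_pos (inv_pos.mpr hnw), inv_mul_cancel₀ (ne_of_gt hnw)]
        have h1 : ⟪w0, M₂ w0⟫_ℝ ≤ ⟪‖w‖⁻¹ • w, M₂ (‖w‖⁻¹ • w)⟫_ℝ := hmin hmem
        have h2 : ⟪‖w‖⁻¹ • w, M₂ (‖w‖⁻¹ • w)⟫_ℝ = ‖w‖⁻¹ * (‖w‖⁻¹ * ⟪w, M₂ w⟫_ℝ) := by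
          rw [map_smul, real_inner_smul_left, real_inner_smul_right]
        rw [h2] at h1
        have h3 : ⟪w0, M₂ w0⟫_ℝ * ‖w‖^2 ≤ ‖w‖⁻¹ * (‖w‖⁻¹ * ⟪w, M₂ w⟫_ℝ) * ‖w‖^2 :=
          mul_le_mul_of_nonneg_right h1 (by positivity)
        have h4 : ‖w‖⁻¹ * (‖w‖⁻¹ * ⟪w, M₂ w⟫_ℝ) * ‖w‖^2 = ⟪w, M₂ w⟫_ℝ := by
          rw [pow_two]
          field_simp
        rw [h4] at h3
        exact h3
  obtain ⟨t, ht, htnn⟩ : ∃ t : ℝ, t = c / lam ∧ 0 ≤ t :=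
    ⟨c / lam, rfl, le_of_lt (div_pos hc hlam0)⟩
  -- rewrite the y-difference in Ek
  have hyE : ∀ k : ℕ, c⁻¹*‖y k - y (k+1)‖^2 = c*‖A (x (k+1)) - z (k+1)‖^2 := by
    intro k
    rw [hy k]
    have e : y k - (y k + c • (A (x (k+1)) - z (k+1))) = -(c • (A (x (k+1)) - z (k+1))) := by abel
    rw [e, norm_neg, norm_smul, Real.norm_eq_abs, abs_of_pos hc, mul_pow]
    field_simp
  have hVnn : ∀ k, 0 ≤ V k := by
    intro k
    have h1 := hop1 (x k - xs); have h2 := hop2 (z k - zs)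
    have h3 : 0 ≤ c*‖z k - zs‖^2 := by positivity
    have h4 : 0 ≤ c⁻¹*‖y k - ys‖^2 := by positivity
    simp only [hV]; linarith
  have hEnn : ∀ k, 0 ≤ Ek k := by
    intro k
    have h1 := hop1 (x k - x (k+1)); have h2 := hop2 (z k - z (k+1))
    have h3 : 0 ≤ c*‖z k - z (k+1)‖^2 := by positivity
    have h4 : 0 ≤ c⁻¹*‖y k - y (k+1)‖^2 := by positivity
    simp only [hEk]; linarith
  -- bound Ek by the Fejér decrease
  have hEbound : ∀ k : ℕ, Ek k ≤ (3 + 3*t) * (V k - V (k+1)) := by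
    intro k
    have hsplit : ‖A (x (k+1)) - z (k+1)‖^2 ≤ 2*‖A (x (k+1)) - z k‖^2 + 2*‖z k - z (k+1)‖^2 := by
      have e : A (x (k+1)) - z (k+1) = (A (x (k+1)) - z k) + (z k - z (k+1)) := by abel
      rw [e]
      nlinarith [norm_add_le (A (x (k+1)) - z k) (z k - z (k+1)),
        norm_nonneg (A (x (k+1)) - z k + (z k - z (k+1))),
        norm_nonneg (A (x (k+1)) - z k), norm_nonneg (z k - z (k+1)),
        sq_nonneg (‖A (x (k+1)) - z k‖ - ‖z k - z (k+1)‖)]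
    have hlz : c*‖z k - z (k+1)‖^2 ≤ t * opSq M₂ (z k - z (k+1)) := by
      have h0 := hlam (z k - z (k+1))
      calc c*‖z k - z (k+1)‖^2 = t * (lam * ‖z k - z (k+1)‖^2) := by
            rw [ht]; field_simp
        _ ≤ t * opSq M₂ (z k - z (k+1)) := mul_le_mul_of_nonneg_left h0 htnn
    have hDk := hF k
    have ha := hop1 (x k - x (k+1))
    have hb := hop2 (z k - z (k+1))
    have hd : 0 ≤ c*‖A (x (k+1)) - z k‖^2 := by positivity
    have hs3 : 0 ≤ c*‖z k - z (k+1)‖^2 := by positivity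
    have hyk := hyE k
    have hr2 := mul_le_mul_of_nonneg_left hsplit (le_of_lt hc)
    have hmul := mul_le_mul_of_nonneg_left hDk (show (0:ℝ) ≤ 3+3*t by linarith)
    simp only [hEk]
    linarith [hmul, hr2, hlz, hyk, mul_nonneg htnn ha, mul_nonneg htnn hd, ha, hb, hd]
  set B := (3 + 3*t) * V 0 with hB
  have hBnn : 0 ≤ B := by
    apply mul_nonneg (by linarith) (hVnn 0)
  have hsumE : ∀ K : ℕ, ∑ k ∈ Finset.range K, Ek k ≤ B := by
    intro K
    have h1 : ∑ k ∈ Finset.range K, Ek k ≤ ∑ k ∈ Finset.range K, (3 + 3*t) * (V k - V (k+1)) :=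
      Finset.sum_le_sum (fun k _ => hEbound k)
    rw [← Finset.mul_sum, Finset.sum_range_sub'] at h1
    have h2 : (3 + 3*t) * (V 0 - V K) ≤ (3 + 3*t) * V 0 := by
      apply mul_le_mul_of_nonneg_left _ (by linarith)
      linarith [hVnn K]
    rw [hB]
    linarith
  -- goal 1 : summability
  have hsum1 : ∀ K : ℕ, ∑ k ∈ Finset.range K, ‖z (k+2) - z (k+1)‖^2 ≤ B / lam := by
    intro K
    have hterm : ∀ k : ℕ, lam * ‖z (k+2) - z (k+1)‖^2 ≤ Ek (k+1) := by
      intro k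
      have h1 : ‖z (k+2) - z (k+1)‖ = ‖z (k+1) - z (k+2)‖ := norm_sub_rev _ _
      have h2 := hlam (z (k+1) - z (k+2))
      have h3 := hop1 (x (k+1) - x (k+2))
      have h4 : 0 ≤ c*‖z (k+1) - z (k+2)‖^2 := by positivity
      have h5 : 0 ≤ c⁻¹*‖y (k+1) - y (k+2)‖^2 := by positivity
      simp only [hEk]
      rw [h1]
      linarith
    have h6 : lam * ∑ k ∈ Finset.range K, ‖z (k+2) - z (k+1)‖^2
        ≤ ∑ k ∈ Finset.range K, Ek (k+1) := by
      rw [Finset.mul_sum]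
      exact Finset.sum_le_sum (fun k _ => hterm k)
    have h7 : ∑ k ∈ Finset.range K, Ek (k+1) ≤ B := by
      have h8 : ∑ k ∈ Finset.range (K+1), Ek k = (∑ k ∈ Finset.range K, Ek (k+1)) + Ek 0 :=
        Finset.sum_range_succ' Ek K
      have h9 := hsumE (K+1)
      rw [h8] at h9
      linarith [hEnn 0]
    rw [le_div_iff₀ hlam0, mul_comm]
    linarith
  constructor
  · exact summable_of_sum_range_le (fun k => by positivity) hsum1
  -- goal 2 : rate
  · refine ⟨Real.sqrt (B/c), Real.sqrt_nonneg _, ?_⟩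
    intro k hk
    obtain ⟨K, rfl⟩ : ∃ K, k = K + 1 := ⟨k-1, (Nat.succ_pred_eq_of_pos hk).symm⟩
    have hanti : Antitone Ek := antitone_nat_of_succ_le hMono
    have hcard : ((K+1 : ℕ) : ℝ) * Ek K ≤ ∑ j ∈ Finset.range (K+1), Ek j := by
      have h1 : ∀ j ∈ Finset.range (K+1), Ek K ≤ Ek j := by
        intro j hj
        exact hanti (Nat.lt_succ_iff.mp (Finset.mem_range.mp hj))
      have h2 := Finset.card_nsmul_le_sum (Finset.range (K+1)) Ek (Ek K) h1
      rwa [Finset.card_range, nsmul_eq_mul] at h2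
    have hEK : ((K+1 : ℕ) : ℝ) * Ek K ≤ B := le_trans hcard (hsumE (K+1))
    have hrk : c*‖A (x (K+1)) - z (K+1)‖^2 ≤ Ek K := by
      have h1 := hyE K
      have h3 := hop1 (x K - x (K+1))
      have h4 : 0 ≤ c*‖z K - z (K+1)‖^2 := by positivity
      have h5 := hop2 (z K - z (K+1))
      simp only [hEk]
      linarith
    have hKpos : (0:ℝ) < ((K+1 : ℕ) : ℝ) := by positivity
    have hbound : ‖A (x (K+1)) - z (K+1)‖^2 ≤ (B/c) / ((K+1 : ℕ) : ℝ) := by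
      rw [div_div, le_div_iff₀ (by positivity)]
      calc ‖A (x (K+1)) - z (K+1)‖^2 * (c * ((K+1 : ℕ) : ℝ))
          = ((K+1 : ℕ) : ℝ) * (c * ‖A (x (K+1)) - z (K+1)‖^2) := by ring
        _ ≤ ((K+1 : ℕ) : ℝ) * Ek K := mul_le_mul_of_nonneg_left hrk (le_of_lt hKpos)
        _ ≤ B := hEK
    have hnorm : ‖A (x (K+1)) - z (K+1)‖ ≤ Real.sqrt ((B/c) / ((K+1 : ℕ) : ℝ)) := by
      rw [← Real.sqrt_sq (norm_nonneg (A (x (K+1)) - z (K+1)))]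
      exact Real.sqrt_le_sqrt hbound
    have hsq : Real.sqrt ((B/c) / ((K+1 : ℕ) : ℝ)) = Real.sqrt (B/c) / Real.sqrt ((K+1 : ℕ) : ℝ) := by
      rw [Real.sqrt_div (by positivity)]
    rw [hsq] at hnorm
    exact hnorm
end
end

section
/- Assume M₁ᵏ − L·Id ∈ S₊(H), M₁ᵏ ⪰ M₁^{k+1}, M₂ᵏ ∈ S₊(G), and M₂ᵏ ⪰ M₂^{k+1} for all k ≥ 0, and let (xᵏ, zᵏ, yᵏ)_{k≥0} be the sequence generated by the variable-metric ADMM algorithm. Then for all k ≥ 0 and all (x, z, y) ∈ H × G × G: l(x^{k+1}, z^{k+1}, y) ≤ l(x, z, y^{k+1}) + (c/2)(‖Ax − zᵏ‖² − ‖Ax − z^{k+1}‖²) + (1/2)(‖x − xᵏ‖²_{M₁ᵏ} − ‖x − x^{k+1}‖²_{M₁^{k+1}} + ‖z − zᵏ‖²_{M₂ᵏ} − ‖z − z^{k+1}‖²_{M₂^{k+1}}) + (1/(2c))(‖y − yᵏ‖² − ‖y − y^{k+1}‖²). -/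
open scoped InnerProductSpace
open Filter

noncomputable section

section MyHelpers

open Topology

variable {E F : Type*} [NormedAddCommGroup E] [InnerProductSpace ℝ E]
  [NormedAddCommGroup F] [InnerProductSpace ℝ F]

lemma my_interp_norm (P Q : F) (t : ℝ) :
    ‖(1-t)•P + t•Q‖^2 = (1-t)*‖P‖^2 + t*‖Q‖^2 - t*(1-t)*‖Q-P‖^2 := by
  simp only [← real_inner_self_eq_norm_sq]
  simp only [inner_add_left, inner_add_right, inner_sub_left, inner_sub_right,
    real_inner_smul_left, real_inner_smul_right, real_inner_comm Q P]
  ring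

lemma my_interp_sq (M : E →L[ℝ] E) (hM : ∀ x y : E, ⟪M x, y⟫_ℝ = ⟪x, M y⟫_ℝ) (P Q : E) (t : ℝ) :
    ⟪(1-t)•P + t•Q, M ((1-t)•P + t•Q)⟫_ℝ
      = (1-t)*⟪P, M P⟫_ℝ + t*⟪Q, M Q⟫_ℝ - t*(1-t)*⟪Q-P, M (Q-P)⟫_ℝ := by
  have h1 : ⟪Q, M P⟫_ℝ = ⟪P, M Q⟫_ℝ := by rw [← hM, real_inner_comm]
  simp only [map_add, map_sub, map_smul, inner_add_left, inner_add_right, inner_sub_left,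
    inner_sub_right, real_inner_smul_left, real_inner_smul_right, h1]
  ring

lemma my_three_point (f : E → EReal) (hbot : ∀ u, f u ≠ ⊥) (hconv : ERealConvex f)
    (φ S : E → ℝ) (hS : ∀ d, 0 ≤ S d)
    (hinterp : ∀ a b : E, ∀ t : ℝ, 0 ≤ t → t ≤ 1 →
      φ ((1-t)•a + t•b) = (1-t)*φ a + t*φ b - (t*(1-t)/2)*S (b-a))
    (m : E) (hmin : ∀ u : E, f m + (φ m : EReal) ≤ f u + (φ u : EReal))
    (u : E) (r s : ℝ) (hr : f m = (r : EReal)) (hs : f u = (s : EReal)) :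
    r + φ m + (1/2) * S (u - m) ≤ s + φ u := by
  have key : ∀ t : ℝ, 0 < t → t ≤ 1 → r + φ m + ((1-t)/2) * S (u - m) ≤ s + φ u := by
    intro t ht ht1
    set ut := (1-t)•m + t•u with hut
    have hc := hconv m u (1-t) t (by linarith) ht.le (by ring)
    rw [hr, hs] at hc
    have hc : f ut ≤ (((1-t)*r + t*s : ℝ) : EReal) := by
      refine hc.trans_eq ?_; norm_cast
    have hne_top : f ut ≠ ⊤ := (hc.trans_lt (EReal.coe_lt_top _)).ne
    have hFt : f ut = ((f ut).toReal : EReal) := (EReal.coe_toReal hne_top (hbot ut)).symm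
    set Ft := (f ut).toReal
    rw [hFt] at hc
    have hc' : Ft ≤ (1-t)*r + t*s := by exact_mod_cast hc
    have hm := hmin ut
    rw [hr, hFt] at hm
    have hm' : r + φ m ≤ Ft + φ ut := by exact_mod_cast hm
    have hφ : φ ut = (1-t)*φ m + t*φ u - (t*(1-t)/2)*S (u-m) := hinterp m u t ht.le ht1
    have hmul : t * (r + φ m + ((1-t)/2) * S (u - m)) ≤ t * (s + φ u) := by nlinarith
    exact le_of_mul_le_mul_left hmul ht
  have h1 := key 1 one_pos le_rfl
  by_contra hcon
  push_neg at hcon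
  set S0 := S (u - m) with hS0def
  have hS0 : 0 < S0 := by
    rcases (hS (u-m)).lt_or_eq with hpos | heq
    · exact hpos
    · have hz : S0 = 0 := by rw [hS0def, ← heq]
      rw [hz] at hcon; linarith
  set D : ℝ := r + φ m + S0/2 - (s + φ u) with hD
  have hDpos : 0 < D := by simp only [hD]; linarith
  set t0 : ℝ := min 1 (D / S0) with ht0
  have ht0pos : 0 < t0 := lt_min one_pos (div_pos hDpos hS0)
  have hk := key t0 ht0pos (min_le_left _ _)
  have htS : t0 * S0 ≤ D := by
    have := mul_le_mul_of_nonneg_right (min_le_right 1 (D / S0)) hS0.le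
    rwa [div_mul_cancel₀ _ hS0.ne'] at this
  have hexp : (1-t0)/2*S0 = S0/2 - (t0*S0)/2 := by ring
  clear_value S0 D t0
  linarith

lemma my_line_hasDerivAt [CompleteSpace E] (h : E → ℝ) (h' : E → E)
    (hgrad : ∀ p : E, HasGradientAt h (h' p) p) (a d : E) (t : ℝ) :
    HasDerivAt (fun s : ℝ => h (a + s • d)) ⟪d, h' (a + t • d)⟫_ℝ t := by
  have hline : HasDerivAt (fun s : ℝ => a + s • d) d t := by
    simpa using ((hasDerivAt_id t).smul_const d).const_add a
  have hf := (hgrad (a + t • d)).hasFDerivAt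
  have := hf.comp_hasDerivAt t hline
  simp [InnerProductSpace.toDual_apply_apply, real_inner_comm] at this
  exact this

lemma my_descent [CompleteSpace E] (h : E → ℝ) (h' : E → E) (L : ℝ) (hL : 0 < L)
    (hgrad : ∀ p : E, HasGradientAt h (h' p) p)
    (hlip : LipschitzWith (Real.toNNReal L) h') (a b : E) :
    h b ≤ h a + ⟪b - a, h' a⟫_ℝ + (L/2) * ‖b - a‖^2 := by
  set d := b - a with hd
  have key : ∀ u w : E, ‖h' u - h' w‖ ≤ L * ‖u - w‖ := by
    intro u w
    have := hlip.dist_le_mul u w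
    rwa [dist_eq_norm, dist_eq_norm, Real.coe_toNNReal _ hL.le] at this
  set ψ : ℝ → ℝ := fun t => h (a + t • d) - t * ⟪d, h' a⟫_ℝ - (L/2) * t^2 * ‖d‖^2 with hψ
  have hψd : ∀ t : ℝ, HasDerivAt ψ
      (⟪d, h' (a + t • d)⟫_ℝ - ⟪d, h' a⟫_ℝ - L * t * ‖d‖^2) t := by
    intro t
    have h1 := my_line_hasDerivAt h h' hgrad a d t
    have h2 : HasDerivAt (fun t : ℝ => t * ⟪d, h' a⟫_ℝ) ⟪d, h' a⟫_ℝ t := by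
      simpa using (hasDerivAt_id t).mul_const ⟪d, h' a⟫_ℝ
    have h3 : HasDerivAt (fun t : ℝ => (L/2) * t^2 * ‖d‖^2) (L * t * ‖d‖^2) t := by
      have := ((hasDerivAt_pow 2 t).const_mul (L/2)).mul_const (‖d‖^2)
      exact this.congr_deriv (by ring)
    have h4 := (h1.sub h2).sub h3
    exact h4
  have hmono : AntitoneOn ψ (Set.Icc 0 1) := by
    apply antitoneOn_of_deriv_nonpos (convex_Icc 0 1)
    · exact fun t _ => (hψd t).continuousAt.continuousWithinAt
    · intro t ht
      exact (hψd t).differentiableAt.differentiableWithinAt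
    · intro t ht
      rw [(hψd t).deriv]
      rw [interior_Icc, Set.mem_Ioo] at ht
      have hb1 : ⟪d, h' (a + t • d) - h' a⟫_ℝ ≤ ‖d‖ * (L * (t * ‖d‖)) := by
        calc ⟪d, h' (a + t • d) - h' a⟫_ℝ ≤ ‖d‖ * ‖h' (a + t • d) - h' a‖ :=
              real_inner_le_norm _ _
          _ ≤ ‖d‖ * (L * ‖(a + t • d) - a‖) := by
              apply mul_le_mul_of_nonneg_left _ (norm_nonneg _)
              exact key _ _
          _ = ‖d‖ * (L * (|t| * ‖d‖)) := by rw [add_sub_cancel_left, norm_smul]; norm_num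
          _ = ‖d‖ * (L * (t * ‖d‖)) := by rw [abs_of_pos ht.1]
      rw [inner_sub_right] at hb1
      nlinarith [hb1]
  have h01 := hmono (Set.left_mem_Icc.mpr one_pos.le) (Set.right_mem_Icc.mpr one_pos.le) one_pos.le
  simp only [hψ] at h01
  simp only [zero_smul, add_zero, one_smul, one_pow, zero_pow, mul_zero, zero_mul, sub_zero,
    one_mul, mul_one] at h01
  have hab : a + d = b := by rw [hd]; abel
  rw [hab] at h01
  linarith [h01, real_inner_comm d (h' a)]

lemma my_convex_grad [CompleteSpace E] (h : E → ℝ) (h' : E → E)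
    (hconv : ConvexOn ℝ Set.univ h)
    (hgrad : ∀ p : E, HasGradientAt h (h' p) p) (a p : E) :
    h a + ⟪p - a, h' a⟫_ℝ ≤ h p := by
  set d := p - a with hd
  set φ : ℝ → ℝ := fun s => h (a + s • d) with hφ
  have hder : HasDerivAt φ ⟪d, h' a⟫_ℝ 0 := by
    have := my_line_hasDerivAt h h' hgrad a d 0
    simpa using this
  have hslope : Filter.Tendsto (slope φ 0) (𝓝[>] 0) (𝓝 ⟪d, h' a⟫_ℝ) :=
    (hasDerivAt_iff_tendsto_slope.mp hder).mono_left
      (nhdsWithin_mono 0 (fun t ht => ne_of_gt ht))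
  have hev : ∀ᶠ t in 𝓝[>] (0:ℝ), slope φ 0 t ≤ h p - h a := by
    filter_upwards [Ioc_mem_nhdsGT_of_mem (Set.left_mem_Ico.mpr one_pos)] with t ht
    obtain ⟨ht0, ht1⟩ := ht
    have hcomb : a + t • d = (1-t) • a + t • p := by
      rw [hd]; module
    have hcvx := hconv.2 (Set.mem_univ a) (Set.mem_univ p) (by linarith : (0:ℝ) ≤ 1 - t)
      ht0.le (by ring)
    rw [smul_eq_mul, smul_eq_mul] at hcvx
    have hφt : φ t ≤ (1-t) * h a + t * h p := by
      show h (a + t • d) ≤ _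
      rw [hcomb]; exact hcvx
    have hφ0 : φ 0 = h a := by simp [hφ]
    rw [slope_def_field, hφ0, sub_zero, div_le_iff₀ ht0]
    nlinarith [hφt]
  have hlim : ⟪d, h' a⟫_ℝ ≤ h p - h a := le_of_tendsto hslope hev
  linarith

lemma my_big_identity {G : Type*} [NormedAddCommGroup G] [InnerProductSpace ℝ G]
    (c : ℝ) (hc : 0 < c) (a b q Z1 Z Y v : G) :
    ⟪v, b - Z1⟫_ℝ - ⟪Y + c•(b - Z1), a - q⟫_ℝ
      + (c/2) * (‖a - Z + c⁻¹•Y‖^2 - ‖b - Z + c⁻¹•Y‖^2)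
      - (c/2) * ‖a - b‖^2
      + (c/2) * (‖b - q + c⁻¹•Y‖^2 - ‖b - Z1 + c⁻¹•Y‖^2)
      - (c/2) * ‖q - Z1‖^2 + (c/2) * ‖b - Z‖^2
    = (c/2) * (‖a - Z‖^2 - ‖a - Z1‖^2)
      + (1/(2*c)) * (‖v - Y‖^2 - ‖v - (Y + c•(b - Z1))‖^2) := by
  simp only [← real_inner_self_eq_norm_sq]
  simp only [inner_add_left, inner_add_right, inner_sub_left, inner_sub_right,
    real_inner_smul_left, real_inner_smul_right,
    real_inner_comm b a, real_inner_comm q a, real_inner_comm Z1 a, real_inner_comm Z a,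
    real_inner_comm Y a, real_inner_comm v a,
    real_inner_comm q b, real_inner_comm Z1 b, real_inner_comm Z b, real_inner_comm Y b,
    real_inner_comm v b,
    real_inner_comm Z1 q, real_inner_comm Z q, real_inner_comm Y q, real_inner_comm v q,
    real_inner_comm Z Z1, real_inner_comm Y Z1, real_inner_comm v Z1,
    real_inner_comm Y Z, real_inner_comm v Z,
    real_inner_comm v Y]
  field_simp
  ring

lemma my_x_interp (A : E →L[ℝ] F) (M : E →L[ℝ] E)
    (hM : ∀ x y : E, ⟪M x, y⟫_ℝ = ⟪x, M y⟫_ℝ)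
    (c : ℝ) (X hk : E) (W : F) (a b : E) (t : ℝ) :
    ⟪((1-t)•a + t•b) - X, hk⟫_ℝ + (c/2) * ‖A ((1-t)•a + t•b) - W‖^2
        + (1/2) * ⟪((1-t)•a + t•b) - X, M (((1-t)•a + t•b) - X)⟫_ℝ
      = (1-t) * (⟪a - X, hk⟫_ℝ + (c/2) * ‖A a - W‖^2 + (1/2) * ⟪a - X, M (a - X)⟫_ℝ)
        + t * (⟪b - X, hk⟫_ℝ + (c/2) * ‖A b - W‖^2 + (1/2) * ⟪b - X, M (b - X)⟫_ℝ)
        - (t*(1-t)/2) * (c * ‖A (b - a)‖^2 + ⟪b - a, M (b - a)⟫_ℝ) := by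
  have h1 : ((1-t)•a + t•b) - X = (1-t)•(a - X) + t•(b - X) := by module
  have h2 : A ((1-t)•a + t•b) - W = (1-t)•(A a - W) + t•(A b - W) := by
    rw [map_add, map_smul, map_smul]; module
  rw [h1, h2, my_interp_norm, my_interp_sq M hM]
  have h3 : (b - X) - (a - X) = b - a := by abel
  have h4 : (A b - W) - (A a - W) = A (b - a) := by rw [map_sub]; abel
  rw [h3, h4, inner_add_left, real_inner_smul_left, real_inner_smul_left]
  ring

lemma my_z_interp (M : F →L[ℝ] F)
    (hM : ∀ x y : F, ⟪M x, y⟫_ℝ = ⟪x, M y⟫_ℝ)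
    (c : ℝ) (B Z : F) (a b : F) (t : ℝ) :
    (c/2) * ‖B - ((1-t)•a + t•b)‖^2
        + (1/2) * ⟪((1-t)•a + t•b) - Z, M (((1-t)•a + t•b) - Z)⟫_ℝ
      = (1-t) * ((c/2) * ‖B - a‖^2 + (1/2) * ⟪a - Z, M (a - Z)⟫_ℝ)
        + t * ((c/2) * ‖B - b‖^2 + (1/2) * ⟪b - Z, M (b - Z)⟫_ℝ)
        - (t*(1-t)/2) * (c * ‖b - a‖^2 + ⟪b - a, M (b - a)⟫_ℝ) := by
  have h1 : ((1-t)•a + t•b) - Z = (1-t)•(a - Z) + t•(b - Z) := by module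
  have h2 : B - ((1-t)•a + t•b) = (1-t)•(B - a) + t•(B - b) := by module
  rw [h1, h2, my_interp_norm, my_interp_sq M hM]
  have h3 : (b - Z) - (a - Z) = b - a := by abel
  have h4 : (B - b) - (B - a) = -(b - a) := by abel
  rw [h3, h4, norm_neg]
  ring

end MyHelpers

theorem stmt8 {H G : Type*}
    [NormedAddCommGroup H] [InnerProductSpace ℝ H] [CompleteSpace H]
    [NormedAddCommGroup G] [InnerProductSpace ℝ G] [CompleteSpace G]
    (f : H → EReal) (g : G → EReal)
    (hfp : ERealProper f) (hfc : ERealConvex f) (hfl : LowerSemicontinuous f)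
    (hgp : ERealProper g) (hgc : ERealConvex g) (hgl : LowerSemicontinuous g)
    (h : H → ℝ) (h' : H → H) (L : ℝ) (hL : 0 < L)
    (hconv : ConvexOn ℝ Set.univ h)
    (hgrad : ∀ p : H, HasGradientAt h (h' p) p)
    (hlip : LipschitzWith (Real.toNNReal L) h')
    (A : H →L[ℝ] G) (c : ℝ) (hc : 0 < c)
    (M₁ : ℕ → (H →L[ℝ] H)) (M₂ : ℕ → (G →L[ℝ] G))
    (hM₁ : ∀ k : ℕ, IsSplusOp (M₁ k)) (hM₂ : ∀ k : ℕ, IsSplusOp (M₂ k))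
    (hM₁L : ∀ k : ℕ, IsSplusOp (M₁ k - L • ContinuousLinearMap.id ℝ H))
    (hM₁mono : ∀ k : ℕ, opLE (M₁ k) (M₁ (k+1)))
    (hM₂mono : ∀ k : ℕ, opLE (M₂ k) (M₂ (k+1)))
    (x : ℕ → H) (z y : ℕ → G)
    (hx : ∀ k : ℕ, IsXUpdateGrad f h' A c (M₁ k) (x k) (z k) (y k) (x (k+1)))
    (hz : ∀ k : ℕ, IsZUpdate g c (M₂ k) (A (x (k+1))) (z k) (y k) (z (k+1)))
    (hy : ∀ k : ℕ, y (k+1) = y k + c • (A (x (k+1)) - z (k+1))) :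
    ∀ k : ℕ, ∀ (p : H) (q v : G),
      LagrH f h g A (x (k+1)) (z (k+1)) v ≤
        LagrH f h g A p q (y (k+1)) +
          (((c/2) * (‖A p - z k‖ ^ 2 - ‖A p - z (k+1)‖ ^ 2)
            + (1/2) * (opSq (M₁ k) (p - x k) - opSq (M₁ (k+1)) (p - x (k+1))
                + opSq (M₂ k) (q - z k) - opSq (M₂ (k+1)) (q - z (k+1)))
            + (1/(2*c)) * (‖v - y k‖ ^ 2 - ‖v - y (k+1)‖ ^ 2) : ℝ) : EReal) := by
  intro k p q v
  have hM1sym := (hM₁ k).1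
  have hM2sym := (hM₂ k).1
  -- finiteness of f (x (k+1)) and g (z (k+1))
  obtain ⟨u0, hu0⟩ := hfp.2
  obtain ⟨w0, hw0⟩ := hgp.2
  have hfX1top : f (x (k+1)) ≠ ⊤ := by
    intro htop
    have h0 := hx k u0
    rw [htop, EReal.top_add_of_ne_bot (EReal.coe_ne_bot _)] at h0
    exact absurd (lt_of_le_of_lt h0 (EReal.add_lt_top hu0 (EReal.coe_ne_top _))) (lt_irrefl _)
  have hgZ1top : g (z (k+1)) ≠ ⊤ := by
    intro htop
    have h0 := hz k w0
    rw [htop, EReal.top_add_of_ne_bot (EReal.coe_ne_bot _)] at h0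
    exact absurd (lt_of_le_of_lt h0 (EReal.add_lt_top hw0 (EReal.coe_ne_top _))) (lt_irrefl _)
  have hFx1 : f (x (k+1)) = (((f (x (k+1))).toReal : ℝ) : EReal) :=
    (EReal.coe_toReal hfX1top (hfp.1 _)).symm
  have hGz1 : g (z (k+1)) = (((g (z (k+1))).toReal : ℝ) : EReal) :=
    (EReal.coe_toReal hgZ1top (hgp.1 _)).symm
  rcases eq_or_ne (f p) ⊤ with hfpt | hfpt
  · have hR : LagrH f h g A p q (y (k+1)) = ⊤ := by
      rw [LagrH, hfpt, EReal.top_add_of_ne_bot (EReal.coe_ne_bot _),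
        EReal.top_add_of_ne_bot (hgp.1 q), EReal.top_add_of_ne_bot (EReal.coe_ne_bot _)]
    rw [hR, EReal.top_add_of_ne_bot (EReal.coe_ne_bot _)]
    exact le_top
  rcases eq_or_ne (g q) ⊤ with hgqt | hgqt
  · have hfin : f p + ((h p : ℝ) : EReal) ≠ ⊥ := by
      intro hbot
      rcases EReal.add_eq_bot_iff.mp hbot with hb | hb
      · exact hfp.1 p hb
      · exact EReal.coe_ne_bot _ hb
    have hR : LagrH f h g A p q (y (k+1)) = ⊤ := by
      rw [LagrH, hgqt, EReal.add_top_of_ne_bot hfin,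
        EReal.top_add_of_ne_bot (EReal.coe_ne_bot _)]
    rw [hR, EReal.top_add_of_ne_bot (EReal.coe_ne_bot _)]
    exact le_top
  have hfpc : f p = (((f p).toReal : ℝ) : EReal) := (EReal.coe_toReal hfpt (hfp.1 p)).symm
  have hgqc : g q = (((g q).toReal : ℝ) : EReal) := (EReal.coe_toReal hgqt (hgp.1 q)).symm
  -- three-point inequality for the x-update
  have I1 : (f (x (k+1))).toReal
        + (⟪x (k+1) - x k, h' (x k)⟫_ℝ + (c/2) * ‖A (x (k+1)) - z k + c⁻¹ • y k‖ ^ 2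
          + (1/2) * opSq (M₁ k) (x (k+1) - x k))
        + (1/2) * (c * ‖A (p - x (k+1))‖^2 + ⟪p - x (k+1), (M₁ k) (p - x (k+1))⟫_ℝ)
      ≤ (f p).toReal
        + (⟪p - x k, h' (x k)⟫_ℝ + (c/2) * ‖A p - z k + c⁻¹ • y k‖ ^ 2
          + (1/2) * opSq (M₁ k) (p - x k)) := by
    refine my_three_point f hfp.1 hfc
      (fun u => ⟪u - x k, h' (x k)⟫_ℝ + (c/2) * ‖A u - z k + c⁻¹ • y k‖ ^ 2
        + (1/2) * opSq (M₁ k) (u - x k))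
      (fun d => c * ‖A d‖^2 + ⟪d, (M₁ k) d⟫_ℝ)
      (fun d => add_nonneg (mul_nonneg hc.le (by positivity)) ((hM₁ k).2 d))
      ?_ (x (k+1)) (hx k) p _ _ hFx1 hfpc
    intro a b t _ _
    simp only [opSq, sub_add]
    exact my_x_interp A (M₁ k) hM1sym c (x k) (h' (x k)) (z k - c⁻¹ • y k) a b t
  -- three-point inequality for the z-update
  have I2 : (g (z (k+1))).toReal
        + ((c/2) * ‖A (x (k+1)) - z (k+1) + c⁻¹ • y k‖ ^ 2
          + (1/2) * opSq (M₂ k) (z (k+1) - z k))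
        + (1/2) * (c * ‖q - z (k+1)‖^2 + ⟪q - z (k+1), (M₂ k) (q - z (k+1))⟫_ℝ)
      ≤ (g q).toReal
        + ((c/2) * ‖A (x (k+1)) - q + c⁻¹ • y k‖ ^ 2 + (1/2) * opSq (M₂ k) (q - z k)) := by
    refine my_three_point g hgp.1 hgc
      (fun w => (c/2) * ‖A (x (k+1)) - w + c⁻¹ • y k‖ ^ 2 + (1/2) * opSq (M₂ k) (w - z k))
      (fun d => c * ‖d‖^2 + ⟪d, (M₂ k) d⟫_ℝ)
      (fun d => add_nonneg (mul_nonneg hc.le (by positivity)) ((hM₂ k).2 d))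
      ?_ (z (k+1)) (hz k) q _ _ hGz1 hgqc
    intro a b t _ _
    simp only [opSq, sub_add_eq_add_sub]
    exact my_z_interp (M₂ k) hM2sym c (A (x (k+1)) + c⁻¹ • y k) (z k) a b t
  simp only [opSq] at I1 I2
  rw [map_sub A p (x (k+1))] at I1
  have I3 := my_descent h h' L hL hgrad hlip (x k) (x (k+1))
  have I4 := my_convex_grad h h' hconv hgrad (x k) p
  have I5 : L * ‖x (k+1) - x k‖^2 ≤ ⟪x (k+1) - x k, (M₁ k) (x (k+1) - x k)⟫_ℝ := by
    have h5 := (hM₁L k).2 (x (k+1) - x k)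
    rw [show (M₁ k - L • ContinuousLinearMap.id ℝ H) (x (k+1) - x k)
        = (M₁ k) (x (k+1) - x k) - L • (x (k+1) - x k) from rfl,
      inner_sub_right, real_inner_smul_right, real_inner_self_eq_norm_sq] at h5
    linarith
  have I6 := hM₁mono k (p - x (k+1))
  have I7 := hM₂mono k (q - z (k+1))
  have I8 := (hM₂ k).2 (z (k+1) - z k)
  have hcn : (0:ℝ) ≤ (c/2) * ‖A (x (k+1)) - z k‖^2 := by positivity
  have ID := my_big_identity c hc (A p) (A (x (k+1))) q (z (k+1)) (z k) (y k) v
  -- reduce the EReal goal to a real inequality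
  simp only [LagrH, opSq]
  rw [hFx1, hGz1, hfpc, hgqc, hy k]
  norm_cast
  linarith [I1, I2, I3, I4, I5, I6, I7, I8, hcn, ID]
end
end
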